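/- arXiv:2108.03417 — 5 statements merged into one kernel-verified Lean document; each statement's English description precedes it below -/
import Mathlib

section
/- Let α, β, λ > 0. Then for every z ∈ ℂ with Re z > λ^{1/α}, the Laplace transform identity ∫_0^∞ e^{−zt} t^{β−1} E_{α,β}(−λ t^α) dt = z^{α−β}/(z^α + λ) holds, where z^α and z^{α−β} denote principal complex powers. -/
open MeasureTheory Set Filter Complex Topology


/-- Integrability of `t^(s-1) * exp(-(x*t))` on `Ioi 0`, real version. -/
lemma LML.integrable_real {s x : ℝ} (hs : 0 < s) (hx : 0 < x) :
    IntegrableOn (fun t : ℝ => t ^ (s - 1) * Real.exp (-(x * t))) (Set.Ioi 0) := by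
  have h := Real.GammaIntegral_convergent hs
  have h2 : IntegrableOn (fun t : ℝ => Real.exp (-(x * t)) * (x * t) ^ (s - 1)) (Set.Ioi 0) := by
    have := (integrableOn_Ioi_comp_mul_left_iff
      (fun u : ℝ => Real.exp (-u) * u ^ (s - 1)) 0 hx).mpr (by simpa using h)
    simpa using this
  have h3 : IntegrableOn (fun t : ℝ => x ^ (1 - s) * (Real.exp (-(x * t)) * (x * t) ^ (s - 1)))
      (Set.Ioi 0) := h2.const_mul _
  refine IntegrableOn.congr_fun h3 (fun t ht => ?_) measurableSet_Ioi
  have ht' : (0 : ℝ) < t := ht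
  have hxx : x ^ (1 - s) * x ^ (s - 1) = 1 := by
    rw [← Real.rpow_add hx]; norm_num
  rw [Real.mul_rpow hx.le ht'.le,
    show x ^ (1 - s) * (Real.exp (-(x * t)) * (x ^ (s - 1) * t ^ (s - 1)))
      = (x ^ (1 - s) * x ^ (s - 1)) * (t ^ (s - 1) * Real.exp (-(x * t))) from by ring,
    hxx, one_mul]

/-- Integrability of `t^(s-1) * exp(-(z*t))` on `Ioi 0`, complex rate. -/
lemma LML.integrable_complex {s : ℝ} {z : ℂ} (hs : 0 < s) (hz : 0 < z.re) :
    IntegrableOn (fun t : ℝ => (t : ℂ) ^ ((s : ℂ) - 1) * Complex.exp (-(z * t)))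
      (Set.Ioi 0) := by
  constructor
  · refine ContinuousOn.aestronglyMeasurable ?_ measurableSet_Ioi
    refine ContinuousOn.mul ?_ ((Complex.continuous_exp.comp
      ((continuous_const.mul Complex.continuous_ofReal).neg)).continuousOn)
    refine continuousOn_of_forall_continuousAt fun t ht => ?_
    exact (continuousAt_cpow_const <| ofReal_mem_slitPlane.2 ht).comp
      Complex.continuous_ofReal.continuousAt
  · rw [← hasFiniteIntegral_norm_iff]
    refine HasFiniteIntegral.congr (LML.integrable_real hs hz).2 ?_
    refine (ae_restrict_iff' measurableSet_Ioi).mpr ?_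
    filter_upwards with t ht
    rw [norm_mul, norm_cpow_eq_rpow_re_of_pos ht,
      Complex.norm_exp]
    have : (-(z * (t : ℂ))).re = -(z.re * t) := by simp
    rw [this]
    simp

lemma LML.meas (s : ℝ) (w : ℂ) {g : ℝ → ℂ} (hg : Continuous g) :
    AEStronglyMeasurable (fun t : ℝ => (t : ℂ) ^ ((s : ℂ) - 1) * (Complex.exp (-(w * t)) * g t))
      (volume.restrict (Set.Ioi 0)) := by
  refine ContinuousOn.aestronglyMeasurable ?_ measurableSet_Ioi
  refine ContinuousOn.mul ?_ (((Complex.continuous_exp.comp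
    ((continuous_const.mul Complex.continuous_ofReal).neg)).mul hg).continuousOn)
  refine continuousOn_of_forall_continuousAt fun t ht => ?_
  exact (continuousAt_cpow_const <| ofReal_mem_slitPlane.2 ht).comp
    Complex.continuous_ofReal.continuousAt

/-- Laplace transform of `t^(s-1)` with complex rate `z`, `Re z > 0`. -/
lemma LML.laplace_cpow {s : ℝ} (hs : 0 < s) {z : ℂ} (hz : 0 < z.re) :
    ∫ t in Set.Ioi (0 : ℝ), (t : ℂ) ^ ((s : ℂ) - 1) * Complex.exp (-(z * t))
      = Complex.Gamma s * z ^ (-(s : ℂ)) := by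
  set F : ℂ → ℂ := fun w => ∫ t in Set.Ioi (0 : ℝ),
    (t : ℂ) ^ ((s : ℂ) - 1) * Complex.exp (-(w * t)) with hF
  set G : ℂ → ℂ := fun w => Complex.Gamma s * w ^ (-(s : ℂ)) with hG
  set U : Set ℂ := {w : ℂ | 0 < w.re} with hU
  have hUopen : IsOpen U := isOpen_lt continuous_const Complex.continuous_re
  have hFdiff : DifferentiableOn ℂ F U := by
    intro z₀ hz₀
    have hz₀' : 0 < z₀.re := hz₀
    have hεpos : 0 < z₀.re / 2 := by positivity
    have key := hasDerivAt_integral_of_dominated_loc_of_deriv_le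
      (μ := volume.restrict (Set.Ioi 0))
      (F := fun (w : ℂ) (t : ℝ) => (t : ℂ) ^ ((s : ℂ) - 1) * Complex.exp (-(w * t)))
      (F' := fun (w : ℂ) (t : ℝ) =>
        (t : ℂ) ^ ((s : ℂ) - 1) * (Complex.exp (-(w * t)) * -(t : ℂ)))
      (x₀ := z₀) (s := Metric.ball z₀ (z₀.re / 2))
      (bound := fun t : ℝ => t ^ (s + 1 - 1) * Real.exp (-(z₀.re / 2 * t)))
      (Metric.ball_mem_nhds z₀ hεpos) (Eventually.of_forall fun w => by
        simpa using LML.meas s w continuous_const (g := fun _ => (1:ℂ)))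
      (LML.integrable_complex hs hz₀')
      (LML.meas s z₀ (g := fun t : ℝ => -(t:ℂ)) (Complex.continuous_ofReal.neg)) ?_
      (LML.integrable_real (by linarith) hεpos) ?_
    · exact (key.2.differentiableAt).differentiableWithinAt
    · -- bound
      refine (ae_restrict_iff' measurableSet_Ioi).mpr (Eventually.of_forall fun t ht => ?_)
      intro w hw
      have ht' : (0 : ℝ) < t := ht
      have hwre : z₀.re / 2 ≤ w.re := by
        have h1 : |(w - z₀).re| ≤ ‖w - z₀‖ := Complex.abs_re_le_norm _
        have hd := Metric.mem_ball.mp hw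
        rw [Complex.dist_eq] at hd
        have := abs_le.mp (h1.trans hd.le)
        simp only [Complex.sub_re] at this
        linarith [this.1]
      rw [norm_mul, norm_mul,
        norm_cpow_eq_rpow_re_of_pos ht', Complex.norm_exp, norm_neg, Complex.norm_real,
        Real.norm_eq_abs, abs_of_pos ht']
      have hre : (-(w * (t : ℂ))).re = -(w.re * t) := by simp
      rw [hre, show ((s : ℂ) - 1).re = s - 1 by simp]
      show _ ≤ t ^ (s + 1 - 1) * Real.exp (-(z₀.re / 2 * t))
      have hbt : t ^ (s + 1 - 1) = t ^ (s - 1) * t := by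
        rw [show s + 1 - 1 = (s - 1) + 1 by ring, Real.rpow_add ht', Real.rpow_one]
      have hexp : Real.exp (-(w.re * t)) ≤ Real.exp (-(z₀.re / 2 * t)) := by
        apply Real.exp_le_exp.mpr; nlinarith
      rw [hbt]
      calc t ^ (s - 1) * (Real.exp (-(w.re * t)) * t)
          = t ^ (s - 1) * t * Real.exp (-(w.re * t)) := by ring
        _ ≤ t ^ (s - 1) * t * Real.exp (-(z₀.re / 2 * t)) := by
            apply mul_le_mul_of_nonneg_left hexp; positivity
    · -- differentiability in w
      refine (ae_restrict_iff' measurableSet_Ioi).mpr (Eventually.of_forall fun t ht => ?_)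
      intro w hw
      have h1 : HasDerivAt (fun w : ℂ => -(w * t)) (-(t : ℂ)) w := by
        exact (hasDerivAt_mul_const (t : ℂ)).neg
      exact (h1.cexp).const_mul _
  have hGdiff : DifferentiableOn ℂ G U := by
    intro w hw
    exact ((differentiableAt_id.cpow (differentiableAt_const _)
      (Or.inl hw)).const_mul _).differentiableWithinAt
  have hreal : ∀ x : ℝ, 0 < x → F x = G x := by
    intro x hx
    have h := integral_cpow_mul_exp_neg_mul_Ioi (a := (s : ℂ)) (r := x) (by simpa using hs) hx
    have hL : F (x : ℂ) = (1 / (x : ℂ)) ^ (s : ℂ) * Complex.Gamma s := h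
    rw [hL, hG, one_div, inv_cpow _ _ (by
        rw [Complex.arg_ofReal_of_nonneg hx.le]; exact Ne.symm Real.pi_ne_zero),
      ← Complex.cpow_neg, mul_comm]
  have htend : Tendsto (fun n : ℕ => ((1 + (1 : ℝ) / (n + 1) : ℝ) : ℂ)) atTop (𝓝[≠] (1 : ℂ)) := by
    refine tendsto_nhdsWithin_of_tendsto_nhds_of_eventually_within _ ?_ ?_
    · have h1 : Tendsto (fun n : ℕ => 1 + (1 : ℝ) / (n + 1)) atTop (𝓝 1) := by
        simpa using (tendsto_const_nhds (x := (1:ℝ))).add tendsto_one_div_add_atTop_nhds_zero_nat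
      refine Tendsto.congr (fun n => ?_) ((Complex.continuous_ofReal.tendsto 1).comp h1)
      simp [Function.comp]
    · filter_upwards with n
      simp only [mem_compl_iff, mem_singleton_iff]
      intro hcon
      have : (1 + (1 : ℝ) / (n + 1)) = 1 := by exact_mod_cast hcon
      have hpos : (0 : ℝ) < 1 / (n + 1) := by positivity
      linarith
  have heq : EqOn F G U := by
    refine AnalyticOnNhd.eqOn_of_preconnected_of_frequently_eq
      (hFdiff.analyticOnNhd hUopen) (hGdiff.analyticOnNhd hUopen)
      (convex_halfSpace_re_gt 0).isPreconnected (show (1 : ℂ) ∈ U by simp [hU]) ?_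
    exact htend.frequently (Frequently.of_forall fun n => hreal _ (by positivity))
  exact heq hz


/-- The Mittag-Leffler function `E_{α,β}(x) = ∑_{k=0}^∞ x^k / Γ(αk + β)` for real `x`. -/
noncomputable def mittagLeffler (α β x : ℝ) : ℝ :=
  ∑' k : ℕ, x ^ k / Real.Gamma (α * k + β)

/-- For `α, β, λ > 0` and `Re z > λ^{1/α}`, the Laplace transform identity
`∫_0^∞ e^{-zt} t^{β-1} E_{α,β}(-λ t^α) dt = z^{α-β}/(z^α + λ)` holds, with principal
complex powers. -/
theorem laplace_mittagLeffler (α β lam : ℝ) (hα : 0 < α) (hβ : 0 < β) (hlam : 0 < lam)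
    (z : ℂ) (hz : lam ^ (1 / α) < z.re) :
    ∫ t in Set.Ioi (0 : ℝ),
        Complex.exp (-z * t) * ((t ^ (β - 1) : ℝ) : ℂ) *
          ((mittagLeffler α β (-lam * t ^ α) : ℝ) : ℂ)
      = z ^ ((α : ℂ) - (β : ℂ)) / (z ^ (α : ℂ) + (lam : ℂ)) := by
  have hz0re : 0 < z.re := lt_trans (Real.rpow_pos_of_pos hlam _) hz
  have hz0 : z ≠ 0 := fun h => by rw [h] at hz0re; simp at hz0re
  set x := z.re with hxdef
  have hx : 0 < x := hz0re
  have hxα : lam < x ^ α := by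
    have h1 : (lam ^ (1 / α)) ^ α < x ^ α :=
      Real.rpow_lt_rpow (Real.rpow_nonneg hlam.le _) hz hα
    rwa [one_div, Real.rpow_inv_rpow hlam.le hα.ne'] at h1
  have hzabs : lam < ‖z‖ ^ α := by
    refine lt_of_lt_of_le hxα (Real.rpow_le_rpow hx.le (Complex.re_le_norm z) hα.le)
  have hs : ∀ k : ℕ, 0 < α * k + β := fun k => by positivity
  have hΓpos : ∀ k : ℕ, 0 < Real.Gamma (α * k + β) := fun k => Real.Gamma_pos_of_pos (hs k)
  -- the summand functions
  set f : ℕ → ℝ → ℂ := fun k t =>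
    (((-lam) ^ k / Real.Gamma (α * k + β) : ℝ) : ℂ) *
      ((t : ℂ) ^ ((↑(α * k + β) : ℂ) - 1) * Complex.exp (-(z * t))) with hf
  -- Claim A : pointwise expansion
  have hA : ∀ t ∈ Set.Ioi (0 : ℝ),
      Complex.exp (-z * t) * ((t ^ (β - 1) : ℝ) : ℂ) *
        ((mittagLeffler α β (-lam * t ^ α) : ℝ) : ℂ) = ∑' k, f k t := by
    intro t ht
    have ht' : (0 : ℝ) < t := ht
    rw [mittagLeffler, Complex.ofReal_tsum,
      ← tsum_mul_left (a := Complex.exp (-z * t) * ((t ^ (β - 1) : ℝ) : ℂ))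
        (f := fun k : ℕ => (((-lam * t ^ α) ^ k / Real.Gamma (α * k + β) : ℝ) : ℂ))]
    refine tsum_congr fun k => ?_
    have hpow : (-lam * t ^ α) ^ k = (-lam) ^ k * t ^ (α * k) := by
      rw [mul_pow, ← Real.rpow_natCast (t ^ α) k, ← Real.rpow_mul ht'.le]
    have hrpow : ((t : ℝ) ^ (α * k + β - 1) : ℝ) = t ^ (β - 1) * t ^ (α * (k : ℝ)) := by
      rw [← Real.rpow_add ht']; ring_nf
    have hcpow : (t : ℂ) ^ ((↑(α * k + β) : ℂ) - 1) = ((t ^ (α * k + β - 1) : ℝ) : ℂ) := by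
      rw [Complex.ofReal_cpow ht'.le]
      push_cast
      ring_nf
    simp only [hf]
    rw [hpow, hcpow, hrpow]
    push_cast
    ring
  -- Claim B : integrability
  have hB : ∀ k : ℕ, Integrable (f k) (volume.restrict (Set.Ioi 0)) := fun k =>
    ((LML.integrable_complex (hs k) hz0re).const_mul _ : IntegrableOn _ _ _)
  -- Claim C : values of the integrals
  have hC : ∀ k : ℕ, ∫ t in Set.Ioi (0 : ℝ), f k t
      = ((-lam : ℂ)) ^ k * z ^ (-(↑(α * k + β) : ℂ)) := by
    intro k
    rw [hf]
    simp only
    rw [MeasureTheory.integral_const_mul, LML.laplace_cpow (hs k) hz0re,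
      Complex.Gamma_ofReal]
    have hΓ : ((Real.Gamma (α * k + β) : ℝ) : ℂ) ≠ 0 := by
      exact_mod_cast (hΓpos k).ne'
    push_cast
    field_simp
  -- Claim D : integrals of the norms
  have hD : ∀ k : ℕ, (∫ t in Set.Ioi (0 : ℝ), ‖f k t‖)
      = lam ^ k * (1 / x) ^ (α * k + β) := by
    intro k
    have heq : ∀ t ∈ Set.Ioi (0 : ℝ), ‖f k t‖
        = (lam ^ k / Real.Gamma (α * k + β)) *
          (t ^ (α * k + β - 1) * Real.exp (-(x * t))) := by
      intro t ht
      have ht' : (0 : ℝ) < t := ht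
      rw [hf]
      simp only
      rw [norm_mul, norm_mul,
        norm_cpow_eq_rpow_re_of_pos ht', Complex.norm_exp, Complex.norm_real, Real.norm_eq_abs]
      have h1 : |(-lam) ^ k / Real.Gamma (α * k + β)| = lam ^ k / Real.Gamma (α * k + β) := by
        rw [_root_.abs_div, _root_.abs_pow, _root_.abs_neg, _root_.abs_of_pos hlam, _root_.abs_of_pos (hΓpos k)]
      have h2 : ((↑(α * k + β) : ℂ) - 1).re = α * k + β - 1 := by simp
      have h3 : (-(z * (t : ℂ))).re = -(x * t) := by simp [hxdef]
      rw [h1, h2, h3]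
    rw [setIntegral_congr_fun measurableSet_Ioi heq, MeasureTheory.integral_const_mul,
      Real.integral_rpow_mul_exp_neg_mul_Ioi (hs k) hx]
    field_simp
    try ring
  -- Claim E : summability of the norm integrals
  have hE : Summable fun k : ℕ => ∫ t in Set.Ioi (0 : ℝ), ‖f k t‖ := by
    have hy : (0 : ℝ) < 1 / x := by positivity
    have hr0 : (0 : ℝ) ≤ lam * (1 / x) ^ α := by positivity
    have hr1 : lam * (1 / x) ^ α < 1 := by
      rw [one_div, Real.inv_rpow hx.le, ← div_eq_mul_inv]
      exact (div_lt_one (Real.rpow_pos_of_pos hx α)).mpr hxα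
    refine Summable.congr (((summable_geometric_of_lt_one hr0 hr1).mul_right
      ((1 / x) ^ β)) ) fun k => ?_
    rw [hD k, mul_pow, ← Real.rpow_natCast ((1/x) ^ α) k, ← Real.rpow_mul hy.le,
      mul_assoc, ← Real.rpow_add hy]
    try push_cast
    try ring_nf
  -- put it together
  have hHasSum := MeasureTheory.hasSum_integral_of_summable_integral_norm hB hE
  rw [← setIntegral_congr_fun measurableSet_Ioi hA] at hHasSum
  simp only [hC] at hHasSum
  -- geometric series
  have hnormlt : ‖(-lam : ℂ) * z ^ (-(α : ℂ))‖ < 1 := by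
    rw [norm_mul, norm_neg,
      Complex.norm_real, Real.norm_eq_abs, abs_of_pos hlam, Complex.norm_cpow_of_ne_zero hz0]
    simp only [Complex.neg_re, Complex.ofReal_re, Complex.neg_im, Complex.ofReal_im, neg_zero,
      zero_mul, mul_zero, Real.exp_zero, div_one]
    rw [Real.rpow_neg (norm_nonneg z)]
    rw [← div_eq_mul_inv]
    exact (div_lt_one (Real.rpow_pos_of_pos (norm_pos_iff.mpr hz0) α)).mpr hzabs
  have hgeom : HasSum (fun k : ℕ => ((-lam : ℂ) * z ^ (-(α : ℂ))) ^ k * z ^ (-(β : ℂ)))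
      ((1 - (-lam : ℂ) * z ^ (-(α : ℂ)))⁻¹ * z ^ (-(β : ℂ))) :=
    (hasSum_geometric_of_norm_lt_one hnormlt).mul_right _
  have hterm : ∀ k : ℕ, ((-lam : ℂ) * z ^ (-(α : ℂ))) ^ k * z ^ (-(β : ℂ))
      = ((-lam : ℂ)) ^ k * z ^ (-(↑(α * k + β) : ℂ)) := by
    intro k
    rw [mul_pow, ← Complex.cpow_mul_nat z (-(α : ℂ)) k, mul_assoc,
      ← Complex.cpow_add _ _ hz0]
    congr 2
    push_cast
    ring
  rw [funext hterm] at hgeom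
  have hval := hHasSum.unique hgeom
  rw [hval]
  -- final algebra
  have hinv : z ^ (α : ℂ) * z ^ (-(α : ℂ)) = 1 := by
    rw [← Complex.cpow_add _ _ hz0]; simp
  have hsub : z ^ ((α : ℂ) - (β : ℂ)) = z ^ (α : ℂ) * z ^ (-(β : ℂ)) := by
    rw [← Complex.cpow_add _ _ hz0]; ring_nf
  have hden : z ^ (α : ℂ) + (lam : ℂ) ≠ 0 := by
    intro h
    have h2 : z ^ (α : ℂ) = -(lam : ℂ) := by linear_combination h
    have h3 : ‖z ^ (α : ℂ)‖ = lam := by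
      rw [h2]; simp [abs_of_pos hlam]
    have h4 : ‖z ^ (α : ℂ)‖ = ‖z‖ ^ α := by
      rw [Complex.norm_cpow_of_ne_zero hz0]; simp
    rw [h4] at h3
    linarith
  have key : (1 : ℂ) - (-lam : ℂ) * z ^ (-(α : ℂ)) = (z ^ (α : ℂ) + lam) * z ^ (-(α : ℂ)) := by
    linear_combination -hinv
  have hzinv : (z ^ (-(α : ℂ)))⁻¹ = z ^ (α : ℂ) := inv_eq_of_mul_eq_one_left hinv
  rw [key, mul_inv, hzinv, hsub, div_eq_mul_inv]
  ring
end

section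
/- Let α, λ > 0. Then for every t > 0 the function t ↦ E_α(−λ t^α) is differentiable at t with d/dt E_α(−λ t^α) = −λ t^{α−1} E_{α,α}(−λ t^α). -/
open Real Filter

private lemma gamma_key {c y : ℝ} (hc : 0 < c) (hy : 2 ≤ y) :
    y * Real.Gamma y ≤ (y + c) ^ (max (1 - c) 0) * Real.Gamma (y + c) := by
  have hy0 : 0 < y := lt_of_lt_of_le two_pos hy
  have hyc : 0 < y + c := by linarith
  rcases le_or_gt 1 c with h1 | h1
  · rw [max_eq_right (by linarith), Real.rpow_zero, one_mul, ← Real.Gamma_add_one hy0.ne']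
    exact Real.Gamma_strictMonoOn_Ici.monotoneOn (Set.mem_Ici.2 (by linarith))
      (Set.mem_Ici.2 (by linarith)) (by linarith)
  · rw [max_eq_left (by linarith)]
    have hG1 : 0 < Real.Gamma (y + c) := Real.Gamma_pos_of_pos hyc
    have hconv := Real.convexOn_log_Gamma.2 (Set.mem_Ioi.2 hyc)
      (Set.mem_Ioi.2 (by linarith : (0:ℝ) < y + c + 1)) hc.le
      (by linarith : (0:ℝ) ≤ 1 - c) (by ring)
    simp only [smul_eq_mul, Function.comp_apply] at hconv
    have hpt : c * (y + c) + (1 - c) * (y + c + 1) = y + 1 := by ring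
    rw [hpt] at hconv
    have hGadd : Real.Gamma (y + c + 1) = (y + c) * Real.Gamma (y + c) :=
      Real.Gamma_add_one hyc.ne'
    rw [hGadd, Real.log_mul hyc.ne' hG1.ne'] at hconv
    have hlhs : y * Real.Gamma y = Real.Gamma (y + 1) := (Real.Gamma_add_one hy0.ne').symm
    rw [hlhs, ← Real.log_le_log_iff (Real.Gamma_pos_of_pos (by linarith))
      (by positivity), Real.log_mul (by positivity) hG1.ne', Real.log_rpow hyc]
    nlinarith [hconv]

private lemma summable_ML (c d x : ℝ) (hc : 0 < c) :
    Summable (fun k : ℕ => x ^ k / Real.Gamma (c * k + d)) := by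
  set e := max (1 - c) 0 with he
  have he0 : 0 ≤ e := le_max_right _ _
  have he1 : e < 1 := by
    rw [he]; exact max_lt (by linarith) one_pos
  refine summable_of_ratio_norm_eventually_le (r := 1/2) (by norm_num) ?_
  have hlin : Tendsto (fun k : ℕ => c * k + d) atTop atTop :=
    tendsto_atTop_add_const_right _ d (tendsto_natCast_atTop_atTop.const_mul_atTop hc)
  have h2 : Tendsto (fun k : ℕ => (c * k + d + c) ^ (1 - e)) atTop atTop :=
    (tendsto_rpow_atTop (by linarith)).comp (tendsto_atTop_add_const_right _ c hlin)
  filter_upwards [hlin.eventually_ge_atTop 2, hlin.eventually_ge_atTop c,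
    h2.eventually_ge_atTop (4 * |x| + 1)] with k hk2 hkc hk4
  set y := c * (k : ℝ) + d with hy
  have hy0 : 0 < y := lt_of_lt_of_le two_pos hk2
  have hyc : 0 < y + c := by linarith
  have hGy : 0 < Real.Gamma y := Real.Gamma_pos_of_pos hy0
  have hGyc : 0 < Real.Gamma (y + c) := Real.Gamma_pos_of_pos hyc
  have hpow : 0 < (y + c) ^ e := Real.rpow_pos_of_pos hyc e
  have hcast : c * ((k + 1 : ℕ) : ℝ) + d = y + c := by push_cast; ring
  simp only [hcast]
  have hkey := gamma_key hc hk2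
  have hsub : (y + c) ^ (1 - e) = (y + c) / (y + c) ^ e := by
    rw [Real.rpow_sub hyc, Real.rpow_one]
  have h5 : 4 * |x| + 1 ≤ 2 * (y / (y + c) ^ e) := by
    calc 4 * |x| + 1 ≤ (y + c) / (y + c) ^ e := by rw [← hsub]; exact hk4
      _ ≤ 2 * y / (y + c) ^ e := (div_le_div_iff_of_pos_right hpow).2 (by linarith)
      _ = 2 * (y / (y + c) ^ e) := by ring
  have hB : 2 * |x| ≤ y / (y + c) ^ e := by
    have := abs_nonneg x; linarith
  have hA : 2 * |x| * Real.Gamma y ≤ Real.Gamma (y + c) := by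
    calc 2 * |x| * Real.Gamma y ≤ y / (y + c) ^ e * Real.Gamma y :=
          mul_le_mul_of_nonneg_right hB hGy.le
      _ = y * Real.Gamma y / (y + c) ^ e := by ring
      _ ≤ Real.Gamma (y + c) := (div_le_iff₀ hpow).2 (hkey.trans_eq (mul_comm _ _))
  rw [norm_div, norm_div, norm_pow, norm_pow, Real.norm_eq_abs, Real.norm_eq_abs,
    Real.norm_eq_abs, abs_of_pos hGy, abs_of_pos hGyc, ← mul_div_assoc,
    div_le_div_iff₀ hGyc hGy, pow_succ]
  nlinarith [mul_le_mul_of_nonneg_left hA (pow_nonneg (abs_nonneg x) k)]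

/-- For `α, λ > 0` and `t > 0`:
`d/dt E_α(-λ t^α) = -λ t^{α-1} E_{α,α}(-λ t^α)`. -/
theorem hasDerivAt_mittagLeffler_one (α lam t : ℝ) (hα : 0 < α) (hlam : 0 < lam)
    (ht : 0 < t) :
    HasDerivAt (fun s : ℝ => mittagLeffler α 1 (-lam * s ^ α))
      (-lam * t ^ (α - 1) * mittagLeffler α α (-lam * t ^ α)) t := by
  have ht2 : 0 < t / 2 := half_pos ht
  have ht1 : 0 < t + 1 := by linarith
  set S : Set ℝ := Set.Ioo (t / 2) (t + 1) with hS
  have htS : t ∈ S := ⟨by linarith, by linarith⟩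
  -- the summable bound on derivatives
  set u : ℕ → ℝ := fun k =>
    lam ^ k * (α * k) * ((t / 2) ^ (α * k - 1) + (t + 1) ^ (α * k - 1)) /
      Real.Gamma (α * k + 1) with hu_def
  have hrw : ∀ b : ℝ, 0 < b → ∀ k : ℕ, b ^ (α * (k : ℝ) - 1) = b⁻¹ * (b ^ α) ^ k := by
    intro b hb k
    rw [← Real.rpow_natCast (b ^ α) k, ← Real.rpow_mul hb.le, Real.rpow_sub hb,
      Real.rpow_one, div_eq_inv_mul, mul_comm α]
  have hGpos : ∀ k : ℕ, 0 < Real.Gamma (α * k + 1) := fun k =>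
    Real.Gamma_pos_of_pos (by positivity)
  have hu : Summable u := by
    set v : ℕ → ℝ := fun k =>
      (t / 2)⁻¹ * ((lam * (t / 2) ^ α) ^ k / Real.Gamma (α * k)) +
        (t + 1)⁻¹ * ((lam * (t + 1) ^ α) ^ k / Real.Gamma (α * k)) with hv_def
    have hv : Summable v := by
      have h1 := (summable_ML α 0 (lam * (t / 2) ^ α) hα).mul_left (t / 2)⁻¹
      have h2 := (summable_ML α 0 (lam * (t + 1) ^ α) hα).mul_left (t + 1)⁻¹
      simpa only [add_zero] using h1.add h2
    refine Summable.of_nonneg_of_le (fun k => ?_) (fun k => ?_) hv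
    · apply div_nonneg _ (hGpos k).le
      positivity
    · rcases Nat.eq_zero_or_pos k with rfl | hk
      · simp only [hu_def, Nat.cast_zero, mul_zero, zero_mul, mul_zero, pow_zero, one_mul,
          mul_zero, zero_div, hv_def]
        positivity
      · have hαk : 0 < α * (k : ℝ) := by
          have : (1 : ℝ) ≤ (k : ℝ) := by exact_mod_cast hk
          nlinarith
        have hGk : 0 ≤ Real.Gamma (α * k) := Real.Gamma_nonneg_of_nonneg hαk.le
        have : u k = v k := by
          rw [hu_def]
          simp only
          rw [Real.Gamma_add_one hαk.ne', hrw _ ht2 k, hrw _ ht1 k,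
            show lam ^ k * (α * (k : ℝ)) *
                ((t / 2)⁻¹ * ((t / 2) ^ α) ^ k + (t + 1)⁻¹ * ((t + 1) ^ α) ^ k) =
              (α * (k : ℝ)) * (lam ^ k *
                ((t / 2)⁻¹ * ((t / 2) ^ α) ^ k + (t + 1)⁻¹ * ((t + 1) ^ α) ^ k)) from by ring,
            mul_div_mul_left _ _ hαk.ne', hv_def]
          simp only
          rw [mul_pow, mul_pow]
          ring
        rw [this]
  -- termwise derivatives
  have hderiv : ∀ (k : ℕ), ∀ s ∈ S,
      HasDerivAt (fun z : ℝ => (-lam * z ^ α) ^ k / Real.Gamma (α * k + 1))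
        ((-lam) ^ k * (α * k) * s ^ (α * k - 1) / Real.Gamma (α * k + 1)) s := by
    intro k s hs
    have hs0 : 0 < s := lt_trans ht2 hs.1
    have h1 : HasDerivAt (fun z : ℝ => z ^ (α * (k : ℝ)))
        (α * k * s ^ (α * k - 1)) s := Real.hasDerivAt_rpow_const (Or.inl hs0.ne')
    have h2 := (h1.const_mul ((-lam) ^ k)).div_const (Real.Gamma (α * k + 1))
    have h3 : HasDerivAt (fun z : ℝ => (-lam) ^ k * z ^ (α * (k : ℝ)) / Real.Gamma (α * k + 1))
        ((-lam) ^ k * (α * k) * s ^ (α * k - 1) / Real.Gamma (α * k + 1)) s := by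
      exact h2.congr_deriv (by ring)
    refine h3.congr_of_eventuallyEq ?_
    filter_upwards [isOpen_Ioi.mem_nhds (Set.mem_Ioi.2 hs0)] with x hx
    rw [mul_pow, ← Real.rpow_natCast (x ^ α) k, ← Real.rpow_mul (le_of_lt hx), mul_comm α]
  -- the bound
  have hbound : ∀ (k : ℕ), ∀ s ∈ S,
      ‖(-lam) ^ k * (α * k) * s ^ (α * k - 1) / Real.Gamma (α * k + 1)‖ ≤ u k := by
    intro k s hs
    have hs0 : 0 < s := lt_trans ht2 hs.1
    have hspow : s ^ (α * (k : ℝ) - 1) ≤ (t / 2) ^ (α * k - 1) + (t + 1) ^ (α * k - 1) := by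
      rcases le_or_gt 0 (α * (k : ℝ) - 1) with hnn | hneg
      · calc s ^ (α * (k : ℝ) - 1) ≤ (t + 1) ^ (α * (k : ℝ) - 1) :=
              Real.rpow_le_rpow hs0.le hs.2.le hnn
          _ ≤ _ := le_add_of_nonneg_left (Real.rpow_nonneg ht2.le _)
      · calc s ^ (α * (k : ℝ) - 1) ≤ (t / 2) ^ (α * (k : ℝ) - 1) :=
              Real.rpow_le_rpow_of_nonpos ht2 hs.1.le hneg.le
          _ ≤ _ := le_add_of_nonneg_right (Real.rpow_nonneg ht1.le _)
    simp only [hu_def]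
    rw [norm_div, Real.norm_eq_abs, Real.norm_eq_abs, abs_of_pos (hGpos k),
      abs_mul, abs_mul, abs_pow, abs_neg, abs_of_pos hlam,
      abs_of_nonneg (by positivity : (0:ℝ) ≤ α * (k : ℝ)),
      abs_of_nonneg (Real.rpow_nonneg hs0.le _)]
    gcongr lam ^ k * (α * (k:ℝ)) * ?_ / Real.Gamma (α * (k:ℝ) + 1)
  -- summability at the point t
  have hf0 : Summable (fun k : ℕ => (-lam * t ^ α) ^ k / Real.Gamma (α * k + 1)) :=
    summable_ML α 1 _ hα
  have key := hasDerivAt_tsum_of_isPreconnected hu isOpen_Ioo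
    (convex_Ioo _ _).isPreconnected hderiv hbound htS hf0 htS
  have hsum' : Summable (fun k : ℕ =>
      (-lam) ^ k * (α * k) * t ^ (α * k - 1) / Real.Gamma (α * k + 1)) :=
    Summable.of_norm_bounded hu (fun k => hbound k t htS)
  have hval' : (∑' k : ℕ, (-lam) ^ k * (α * k) * t ^ (α * k - 1) / Real.Gamma (α * k + 1)) =
      -lam * t ^ (α - 1) * ∑' k : ℕ, (-lam * t ^ α) ^ k / Real.Gamma (α * k + α) := by
    rw [Summable.tsum_eq_zero_add hsum', ← tsum_mul_left]
    simp only [Nat.cast_zero, mul_zero, zero_mul, zero_div, zero_add]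
    refine tsum_congr fun j => ?_
    have hj : (0:ℝ) < α * (j : ℝ) + α := by positivity
    have hG : 0 < Real.Gamma (α * (j : ℝ) + α) := Real.Gamma_pos_of_pos hj
    push_cast
    rw [show α * ((j : ℝ) + 1) + 1 = (α * (j : ℝ) + α) + 1 by ring,
      Real.Gamma_add_one hj.ne',
      show α * ((j : ℝ) + 1) - 1 = (α - 1) + α * (j : ℝ) by ring,
      Real.rpow_add ht, mul_pow, ← Real.rpow_natCast (t ^ α) j,
      ← Real.rpow_mul ht.le, mul_comm α (j : ℝ), pow_succ]
    field_simp
  simp only [mittagLeffler]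
  rw [← hval']
  exact key
end

section
/- Let α, λ > 0 and let k ≥ 1 be a natural number. Then for every t > 0 the function t ↦ t^k E_{α,k+1}(−λ t^α) is differentiable at t with d/dt ( t^k E_{α,k+1}(−λ t^α) ) = t^{k−1} E_{α,k}(−λ t^α). -/
open Filter Asymptotics

lemma fact_bound (K : ℕ) : ∀ m : ℕ, K ≤ m → K.factorial * K ^ (m - K) ≤ m.factorial := by
  intro m
  induction m with
  | zero => intro h; interval_cases K; simp
  | succ m ih =>
    intro h
    rcases Nat.lt_or_ge K (m+1) with h' | h'
    · have hKm : K ≤ m := Nat.lt_succ_iff.mp h'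
      have : m + 1 - K = (m - K) + 1 := by omega
      rw [this, pow_succ, ← mul_assoc]
      calc K.factorial * K ^ (m - K) * K ≤ m.factorial * K :=
            Nat.mul_le_mul_right _ (ih hKm)
        _ ≤ m.factorial * (m+1) := Nat.mul_le_mul_left _ (by omega)
        _ = (m+1).factorial := by rw [Nat.factorial_succ]; ring
    · have : K = m + 1 := le_antisymm h h'
      subst this; simp

lemma summable_pow_div_Gamma (α β c : ℝ) (hα : 0 < α) (hβ : 0 < β) (hc : 0 ≤ c) :
    Summable (fun n : ℕ => c ^ n / Real.Gamma (α * n + β)) := by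
  obtain ⟨K, hK2, hKα⟩ : ∃ K : ℕ, 2 ≤ K ∧ 2 * c + 1 ≤ (K : ℝ) ^ α := by
    refine ⟨max 2 ⌈(2*c+1) ^ α⁻¹⌉₊, le_max_left _ _, ?_⟩
    have h1 : (0:ℝ) < 2*c+1 := by linarith
    have h2 : (2*c+1) ^ α⁻¹ ≤ (max 2 ⌈(2*c+1) ^ α⁻¹⌉₊ : ℕ) := by
      calc (2*c+1) ^ α⁻¹ ≤ (⌈(2*c+1) ^ α⁻¹⌉₊ : ℝ) := Nat.le_ceil _
        _ ≤ _ := by exact_mod_cast Nat.cast_le.mpr (le_max_right _ _)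
    calc 2*c+1 = ((2*c+1) ^ α⁻¹) ^ α := (Real.rpow_inv_rpow h1.le hα.ne').symm
      _ ≤ _ := Real.rpow_le_rpow (Real.rpow_nonneg h1.le _) h2 hα.le
  have hKpos : (0:ℝ) < (K:ℝ) := by positivity
  have hK1 : (1:ℝ) ≤ (K:ℝ) := by exact_mod_cast Nat.one_le_iff_ne_zero.mpr (by omega)
  have hKαpos : (0:ℝ) < (K:ℝ) ^ α := Real.rpow_pos_of_pos hKpos _
  set r : ℝ := c / (K:ℝ) ^ α with hr
  have hr0 : 0 ≤ r := div_nonneg hc hKαpos.le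
  have hr1 : r < 1 := by
    rw [hr, div_lt_one hKαpos]; linarith
  set C : ℝ := (K.factorial : ℝ) * (K:ℝ) ^ (β - 2 - K) with hC
  have hCpos : 0 < C := by positivity
  -- key bound
  have key : ∀ n : ℕ, (K:ℝ) + 2 ≤ α * n + β →
      c ^ n / Real.Gamma (α * n + β) ≤ C⁻¹ * r ^ n := by
    intro n hn
    set x : ℝ := α * n + β with hx
    have hx0 : 0 < x := by positivity
    have hx2 : (2:ℝ) ≤ x := by
      have : (2:ℝ) ≤ (K:ℝ) := by exact_mod_cast hK2
      linarith
    set M : ℕ := ⌊x⌋₊ with hM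
    have hM2 : 2 ≤ M := Nat.le_floor hx2
    have hMx : (M:ℝ) ≤ x := Nat.floor_le hx0.le
    have hxM : x < M + 1 := Nat.lt_floor_add_one x
    -- Γ(x) ≥ Γ(M) = (M-1)!
    have hmono : Real.Gamma (M:ℝ) ≤ Real.Gamma x := by
      rcases eq_or_lt_of_le hMx with h | h
      · rw [h]
      · exact (Real.Gamma_strictMonoOn_Ici (Set.mem_Ici.mpr (by exact_mod_cast hM2)) (Set.mem_Ici.mpr (le_trans (by exact_mod_cast hM2) hMx)) h).le
    obtain ⟨m, hm⟩ : ∃ m, M = m + 1 := ⟨M - 1, by omega⟩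
    have hGammaM : Real.Gamma (M:ℝ) = (m.factorial : ℝ) := by
      rw [hm]; push_cast; exact Real.Gamma_nat_eq_factorial m
    have hKm : K ≤ m := by
      have : (K:ℝ) + 2 ≤ x := hn
      have : ((K:ℝ) + 1) < M := by
        linarith
      have : K + 1 < M := by exact_mod_cast this
      omega
    have hfact : (K.factorial : ℝ) * (K:ℝ) ^ (m - K : ℕ) ≤ (m.factorial : ℝ) := by
      exact_mod_cast fact_bound K m hKm
    -- (K:ℝ)^(m-K) as rpow, bounded below by K^(x-2-K)
    have hcast : ((K:ℝ)) ^ (m - K : ℕ) = (K:ℝ) ^ (((m:ℝ)) - K) := by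
      rw [← Real.rpow_natCast (K:ℝ) (m - K)]
      congr 1
      rw [Nat.cast_sub hKm]
    have hmlb : x - 2 - K ≤ (m:ℝ) - K := by
      have : x - 1 < (m:ℝ) + 1 := by rw [hm] at hxM; push_cast at hxM; linarith
      linarith
    have hrpow : (K:ℝ) ^ (x - 2 - (K:ℝ)) ≤ (K:ℝ) ^ ((m:ℝ) - K) :=
      Real.rpow_le_rpow_of_exponent_le hK1 hmlb
    have hGamma_lb : C * ((K:ℝ) ^ α) ^ n ≤ Real.Gamma x := by
      have e1 : C * ((K:ℝ) ^ α) ^ n = (K.factorial : ℝ) * (K:ℝ) ^ (x - 2 - K) := by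
        rw [hC, ← Real.rpow_natCast ((K:ℝ) ^ α) n, ← Real.rpow_mul hKpos.le,
          mul_assoc, ← Real.rpow_add hKpos, hx]
        ring_nf
      rw [e1]
      calc (K.factorial : ℝ) * (K:ℝ) ^ (x - 2 - K)
          ≤ (K.factorial : ℝ) * (K:ℝ) ^ ((m:ℝ) - K) := by
            exact mul_le_mul_of_nonneg_left hrpow (by positivity)
        _ ≤ (m.factorial : ℝ) := by rw [← hcast]; exact hfact
        _ = Real.Gamma (M:ℝ) := hGammaM.symm
        _ ≤ Real.Gamma x := hmono
    have hden : 0 < C * ((K:ℝ) ^ α) ^ n := by positivity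
    calc c ^ n / Real.Gamma x ≤ c ^ n / (C * ((K:ℝ) ^ α) ^ n) :=
          div_le_div_of_nonneg_left (by positivity) hden hGamma_lb
      _ = C⁻¹ * r ^ n := by
          rw [hr, div_pow]
          field_simp
  -- eventual bound, isBigO, summable
  have hev : ∀ᶠ n : ℕ in atTop, (K:ℝ) + 2 ≤ α * n + β := by
    have : Tendsto (fun n : ℕ => α * n + β) atTop atTop :=
      (tendsto_natCast_atTop_atTop.const_mul_atTop hα).atTop_add tendsto_const_nhds
    exact this.eventually_ge_atTop _
  have hO : (fun n : ℕ => c ^ n / Real.Gamma (α * n + β)) =O[atTop] (fun n : ℕ => r ^ n) := by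
    rw [isBigO_iff]
    refine ⟨C⁻¹, ?_⟩
    filter_upwards [hev] with n hn
    have hG : 0 < Real.Gamma (α * n + β) := Real.Gamma_pos_of_pos (by positivity)
    rw [Real.norm_eq_abs, Real.norm_eq_abs, abs_of_nonneg (by positivity),
      abs_of_nonneg (by positivity)]
    exact key n hn
  exact summable_of_isBigO_nat (summable_geometric_of_lt_one hr0 hr1) hO

/-- For `α, λ > 0`, `k ≥ 1` a natural number and `t > 0`:
`d/dt ( t^k E_{α,k+1}(-λ t^α) ) = t^{k-1} E_{α,k}(-λ t^α)`. -/
theorem hasDerivAt_pow_mittagLeffler (α lam t : ℝ) (k : ℕ) (hα : 0 < α) (hlam : 0 < lam)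
    (hk : 1 ≤ k) (ht : 0 < t) :
    HasDerivAt (fun s : ℝ => s ^ k * mittagLeffler α ((k : ℝ) + 1) (-lam * s ^ α))
      (t ^ (k - 1) * mittagLeffler α (k : ℝ) (-lam * t ^ α)) t := by
  have hk1 : (1:ℝ) ≤ (k:ℝ) := by exact_mod_cast hk
  set g : ℕ → ℝ → ℝ := fun n s => (-lam) ^ n * s ^ (α * n + k) / Real.Gamma (α * n + k + 1)
    with hgdef
  set g' : ℕ → ℝ → ℝ := fun n s => (-lam) ^ n * s ^ (α * n + k - 1) / Real.Gamma (α * n + k)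
    with hg'def
  set u : ℕ → ℝ := fun n => (t+1) ^ ((k:ℝ) - 1) * ((lam * (t+1) ^ α) ^ n / Real.Gamma (α * n + k))
    with hudef
  have ht1 : (0:ℝ) < t + 1 := by linarith
  have hpk : ∀ n : ℕ, (0:ℝ) < α * n + k := fun n => by positivity
  have hGpos : ∀ n : ℕ, 0 < Real.Gamma (α * n + (k:ℝ)) := fun n => Real.Gamma_pos_of_pos (hpk n)
  have hG1pos : ∀ n : ℕ, 0 < Real.Gamma (α * n + (k:ℝ) + 1) :=
    fun n => Real.Gamma_pos_of_pos (by have := hpk n; linarith)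
  -- summability of the derivative bound
  have hu : Summable u := by
    apply Summable.mul_left
    exact summable_pow_div_Gamma α k (lam * (t+1)^α) hα (by linarith) (by positivity)
  -- derivatives
  have hg : ∀ n : ℕ, ∀ y ∈ Set.Ioo (0:ℝ) (t+1), HasDerivAt (g n) (g' n y) y := by
    intro n y hy
    have hy0 : y ≠ 0 := hy.1.ne'
    have h1 : HasDerivAt (fun s : ℝ => s ^ (α * n + k))
        ((α * n + k) * y ^ (α * n + k - 1)) y :=
      Real.hasDerivAt_rpow_const (Or.inl hy0)
    have h2 := (h1.const_mul ((-lam) ^ n)).div_const (Real.Gamma (α * n + k + 1))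
    have hGne : Real.Gamma (α * n + (k:ℝ)) ≠ 0 := (hGpos n).ne'
    refine h2.congr_deriv ?_
    rw [Real.Gamma_add_one (hpk n).ne',
      show (-lam) ^ n * ((α * ↑n + ↑k) * y ^ (α * ↑n + ↑k - 1))
        = (α * ↑n + ↑k) * ((-lam) ^ n * y ^ (α * ↑n + ↑k - 1)) from by ring,
      mul_div_mul_left _ _ (hpk n).ne']
  -- bound
  have hg' : ∀ n : ℕ, ∀ y ∈ Set.Ioo (0:ℝ) (t+1), ‖g' n y‖ ≤ u n := by
    intro n y hy
    have hexp : (0:ℝ) ≤ α * n + k - 1 := by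
      have : (0:ℝ) ≤ α * n := by positivity
      linarith
    have habs : ‖g' n y‖ = lam ^ n * y ^ (α * n + k - 1) / Real.Gamma (α * n + k) := by
      rw [hg'def, Real.norm_eq_abs, abs_div, abs_of_pos (hGpos n), abs_mul, abs_pow, abs_neg,
        abs_of_pos hlam, abs_of_nonneg (Real.rpow_nonneg hy.1.le _)]
    rw [habs]
    have hyb : y ^ (α * n + k - 1) ≤ (t+1) ^ (α * n + k - 1) :=
      Real.rpow_le_rpow hy.1.le hy.2.le hexp
    have heq : u n = lam ^ n * (t+1) ^ (α * n + k - 1) / Real.Gamma (α * n + k) := by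
      simp only [hudef]
      rw [mul_pow, ← Real.rpow_natCast ((t+1) ^ α) n, ← Real.rpow_mul ht1.le]
      rw [show α * (n:ℝ) + k - 1 = α * n + ((k:ℝ) - 1) by ring, Real.rpow_add ht1]
      ring
    rw [heq]
    exact div_le_div₀ (by positivity) (mul_le_mul_of_nonneg_left hyb (by positivity))
      (hGpos n) le_rfl
  -- summability at t
  have hg0 : Summable fun n => g n t := by
    apply Summable.of_norm
    have : ∀ n : ℕ, ‖g n t‖ = t ^ ((k:ℝ)) * ((lam * t ^ α) ^ n / Real.Gamma (α * n + ((k:ℝ)+1))) := by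
      intro n
      rw [hgdef, Real.norm_eq_abs, abs_div, abs_of_pos (hG1pos n), abs_mul, abs_pow, abs_neg,
        abs_of_pos hlam, abs_of_nonneg (Real.rpow_nonneg ht.le _)]
      rw [mul_pow, ← Real.rpow_natCast (t ^ α) n, ← Real.rpow_mul ht.le]
      rw [show α * (n:ℝ) + k = α * n + (k:ℝ) by ring]
      rw [show α * (n:ℝ) + (k:ℝ) = (k:ℝ) + α * n by ring, Real.rpow_add ht]
      rw [show α * (n:ℝ) + ((k:ℝ)+1) = α * n + (k:ℝ) + 1 by ring]
      ring
    simp_rw [this]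
    apply Summable.mul_left
    exact summable_pow_div_Gamma α ((k:ℝ)+1) (lam * t ^ α) hα (by linarith) (by positivity)
  -- the tsum derivative
  have hmain : HasDerivAt (fun z => ∑' n, g n z) (∑' n, g' n t) t :=
    hasDerivAt_tsum_of_isPreconnected hu isOpen_Ioo isPreconnected_Ioo
      hg hg' (Set.mem_Ioo.mpr ⟨ht, by linarith⟩) hg0 (Set.mem_Ioo.mpr ⟨ht, by linarith⟩)
  -- identify the derivative value
  have hval : (∑' n, g' n t) = t ^ (k - 1) * mittagLeffler α (k:ℝ) (-lam * t ^ α) := by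
    rw [mittagLeffler, ← tsum_mul_left]
    apply tsum_congr
    intro n
    have htk : (t:ℝ) ^ (k-1 : ℕ) = t ^ ((k:ℝ) - 1) := by
      rw [← Real.rpow_natCast t (k-1)]
      congr 1
      push_cast [Nat.cast_sub hk]
      ring
    simp only [hg'def]
    rw [htk]
    rw [mul_pow, ← Real.rpow_natCast (t ^ α) n, ← Real.rpow_mul ht.le,
      show α * (n:ℝ) + k - 1 = ((k:ℝ)-1) + α * n by ring, Real.rpow_add ht]
    ring
  rw [← hval]
  apply hmain.congr_of_eventuallyEq
  filter_upwards [Ioi_mem_nhds ht] with s hs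
  have hs0 : (0:ℝ) < s := hs
  rw [mittagLeffler, ← tsum_mul_left]
  apply tsum_congr
  intro n
  have hsk : (s:ℝ) ^ k = s ^ ((k:ℝ)) := (Real.rpow_natCast s k).symm
  simp only [hgdef]
  rw [hsk]
  rw [mul_pow, ← Real.rpow_natCast (s ^ α) n, ← Real.rpow_mul hs0.le,
    show α * (n:ℝ) + k = (k:ℝ) + α * n by ring, Real.rpow_add hs0,
    show α * (n:ℝ) + ((k:ℝ)+1) = (k:ℝ) + α * n + 1 by ring]
  ring
end

section
/- Let H be a separable Hilbert space, T > 0 and 0 < β ≤ 1. The Riemann–Liouville operator I^β is injective on L²((0,T);H): if u ∈ L²((0,T);H) and I^β(u)(t) = 0 for almost every t ∈ (0,T), then u = 0 almost everywhere on (0,T). -/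
open MeasureTheory Set intervalIntegral


noncomputable def betaC (β : ℝ) : ℝ := ∫ x in Set.Ioo (0:ℝ) 1, (1 - x) ^ (-β) * x ^ (β - 1)


lemma betaC_integrable {β : ℝ} (hβ0 : 0 < β) (hβ1 : β < 1) :
    IntegrableOn (fun x : ℝ => (1 - x) ^ (-β) * x ^ (β - 1)) (Set.Ioo 0 1) := by
  have hsub : Set.Ioo (0:ℝ) 1 ⊆ Set.Ioc 0 2⁻¹ ∪ Set.Ioo 2⁻¹ 1 := by
    intro x hx
    rcases le_or_gt x 2⁻¹ with h | h
    · exact Or.inl ⟨hx.1, h⟩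
    · exact Or.inr ⟨h, hx.2⟩
  refine IntegrableOn.mono_set (IntegrableOn.union ?_ ?_) hsub
  · -- on (0, 1/2] : bounded by 2^β * x^(β-1)
    have hg : IntegrableOn (fun x : ℝ => (2:ℝ) ^ β * x ^ (β - 1)) (Set.Ioc 0 2⁻¹) := by
      have := (intervalIntegrable_rpow' (a := 0) (b := 2⁻¹) (r := β - 1) (by linarith)).const_mul
        ((2:ℝ) ^ β)
      rwa [intervalIntegrable_iff_integrableOn_Ioc_of_le (by norm_num)] at this
    refine Integrable.mono' hg ?_ ?_
    · refine ContinuousOn.aestronglyMeasurable ?_ measurableSet_Ioc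
      refine ContinuousOn.mul ?_ ?_
      · exact (continuous_const.sub continuous_id).continuousOn.rpow_const
          (fun x hx => Or.inl (by simp only [Pi.sub_apply, id_eq]; intro h; nlinarith [hx.2, sub_eq_zero.mp h]))
      · exact continuousOn_id.rpow_const (fun x hx => Or.inl (ne_of_gt hx.1))
    · filter_upwards [ae_restrict_mem measurableSet_Ioc] with x hx
      have hx1 : (2:ℝ)⁻¹ ≤ 1 - x := by
        have := hx.2; norm_num at this ⊢; linarith
      have h1 : (1 - x) ^ (-β) ≤ (2:ℝ) ^ β := by
        calc (1 - x) ^ (-β) ≤ ((2:ℝ)⁻¹) ^ (-β) :=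
              Real.rpow_le_rpow_of_nonpos (by norm_num) hx1 (by linarith)
        _ = (2:ℝ) ^ β := by
              rw [Real.inv_rpow (by norm_num), ← Real.rpow_neg (by norm_num), neg_neg]
      have hnn : 0 ≤ x ^ (β - 1) := Real.rpow_nonneg (le_of_lt hx.1) _
      have heq : ‖(1 - x) ^ (-β) * x ^ (β - 1)‖ = (1 - x) ^ (-β) * x ^ (β - 1) := by
        rw [Real.norm_eq_abs, abs_of_nonneg]
        exact mul_nonneg (Real.rpow_nonneg (by linarith) _) hnn
      rw [heq]
      exact mul_le_mul_of_nonneg_right h1 hnn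
  · -- on (1/2, 1) : bounded by 2^(1-β) * (1-x)^(-β)
    have hg : IntegrableOn (fun x : ℝ => (2:ℝ) ^ (1-β) * (1 - x) ^ (-β)) (Set.Ioo 2⁻¹ 1) := by
      have h1 : IntervalIntegrable (fun x : ℝ => x ^ (-β)) volume 0 2⁻¹ :=
        intervalIntegrable_rpow' (by linarith)
      have h2' := (h1.comp_sub_left 1).symm
      norm_num at h2'
      rw [intervalIntegrable_iff_integrableOn_Ioc_of_le (by norm_num)] at h2'
      exact (h2'.mono_set (by norm_num [Set.Ioo_subset_Ioc_self])).const_mul _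
    refine Integrable.mono' hg ?_ ?_
    · refine ContinuousOn.aestronglyMeasurable ?_ measurableSet_Ioo
      refine ContinuousOn.mul ?_ ?_
      · exact (continuous_const.sub continuous_id).continuousOn.rpow_const
          (fun x hx => Or.inl (by simp only [Pi.sub_apply, id_eq]; intro h; nlinarith [hx.2, sub_eq_zero.mp h]))
      · exact continuousOn_id.rpow_const (fun x hx => Or.inl (by simp only [id_eq]; exact ne_of_gt (lt_trans (by norm_num) hx.1)))
    · filter_upwards [ae_restrict_mem measurableSet_Ioo] with x hx
      have hx0 : (0:ℝ) < x := lt_trans (by norm_num) hx.1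
      have hx1 : (0:ℝ) < 1 - x := by linarith [hx.2]
      have h1 : x ^ (β - 1) ≤ (2:ℝ) ^ (1 - β) := by
        calc x ^ (β - 1) ≤ ((2:ℝ)⁻¹) ^ (β - 1) :=
              Real.rpow_le_rpow_of_nonpos (by norm_num) (le_of_lt hx.1) (by linarith)
        _ = (2:ℝ) ^ (1 - β) := by
              rw [Real.inv_rpow (by norm_num), ← Real.rpow_neg (by norm_num), neg_sub]
      have hnn : 0 ≤ (1 - x) ^ (-β) := Real.rpow_nonneg (le_of_lt hx1) _
      have heq : ‖(1 - x) ^ (-β) * x ^ (β - 1)‖ = (1 - x) ^ (-β) * x ^ (β - 1) := by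
        rw [Real.norm_eq_abs, abs_of_nonneg]
        exact mul_nonneg hnn (Real.rpow_nonneg (le_of_lt hx0) _)
      rw [heq, mul_comm ((2:ℝ) ^ (1-β))]
      exact mul_le_mul_of_nonneg_left h1 hnn

lemma betaC_pos {β : ℝ} (hβ0 : 0 < β) (hβ1 : β < 1) : 0 < betaC β := by
  rw [betaC, setIntegral_pos_iff_support_of_nonneg_ae]
  · rw [Set.inter_eq_self_of_subset_right]
    · simp [Real.volume_Ioo]
    · intro x hx
      have h1 : (0:ℝ) < 1 - x := by linarith [hx.2]
      simp only [Function.mem_support]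
      exact ne_of_gt (mul_pos (Real.rpow_pos_of_pos h1 _) (Real.rpow_pos_of_pos hx.1 _))
  · filter_upwards [ae_restrict_mem measurableSet_Ioo] with x hx
    have h1 : (0:ℝ) < 1 - x := by linarith [hx.2]
    exact le_of_lt (mul_pos (Real.rpow_pos_of_pos h1 _) (Real.rpow_pos_of_pos hx.1 _))
  · exact betaC_integrable hβ0 hβ1


lemma key_eqOn {β τ t : ℝ} (hβ0 : 0 < β) (hβ1 : β < 1) (hτt : τ < t) :
    Set.EqOn (fun s : ℝ => (t - s) ^ (-β) * (s - τ) ^ (β - 1))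
      (fun s : ℝ => (t - τ)⁻¹ *
        ((1 - ((t - τ)⁻¹ * (s - τ))) ^ (-β) * ((t - τ)⁻¹ * (s - τ)) ^ (β - 1)))
      (Set.Icc τ t) := by
  intro s hs
  have hd0 : (0:ℝ) < t - τ := by linarith
  simp only
  set y := (t - τ)⁻¹ * (s - τ) with hy
  have hy0 : 0 ≤ y :=
    mul_nonneg (le_of_lt (inv_pos.2 hd0)) (by linarith [hs.1])
  have hy1 : y ≤ 1 := by
    rw [hy, ← inv_mul_cancel₀ (ne_of_gt hd0)]
    exact mul_le_mul_of_nonneg_left (by linarith [hs.2]) (le_of_lt (inv_pos.2 hd0))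
  have h1 : t - s = (t - τ) * (1 - y) := by
    rw [hy]; field_simp; ring
  have h2 : s - τ = (t - τ) * y := by
    rw [hy]; field_simp
  have h3 : (t - τ) ^ (-β) * (t - τ) ^ (β - 1) = (t - τ)⁻¹ := by
    rw [← Real.rpow_add hd0, show -β + (β - 1) = -1 by ring, Real.rpow_neg_one]
  rw [h1, h2, Real.mul_rpow (le_of_lt hd0) (by linarith), Real.mul_rpow (le_of_lt hd0) hy0,
    ← h3]
  ring

lemma hh_ii {β : ℝ} (hβ0 : 0 < β) (hβ1 : β < 1) :
    IntervalIntegrable (fun x : ℝ => (1 - x) ^ (-β) * x ^ (β - 1)) volume 0 1 := by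
  rw [intervalIntegrable_iff_integrableOn_Ioc_of_le (by norm_num)]
  have := betaC_integrable hβ0 hβ1
  rwa [IntegrableOn, Measure.restrict_congr_set Ioo_ae_eq_Ioc] at this

lemma gg_ii {β τ t : ℝ} (hβ0 : 0 < β) (hβ1 : β < 1) (hτt : τ < t) :
    IntervalIntegrable
      (fun s : ℝ => (1 - ((t - τ)⁻¹ * (s - τ))) ^ (-β) * ((t - τ)⁻¹ * (s - τ)) ^ (β - 1))
      volume τ t := by
  have hd0 : (0:ℝ) < t - τ := by linarith
  have h1 := ((hh_ii hβ0 hβ1).comp_mul_left (c := (t - τ)⁻¹))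
  have h2 := h1.comp_sub_right τ
  have e1 : (0:ℝ) / (t - τ)⁻¹ + τ = τ := by simp
  have e2 : (1:ℝ) / (t - τ)⁻¹ + τ = t := by field_simp; ring
  rwa [e1, e2] at h2

lemma sub_integrable {β τ t : ℝ} (hβ0 : 0 < β) (hβ1 : β < 1) (hτt : τ < t) :
    IntegrableOn (fun s : ℝ => (t - s) ^ (-β) * (s - τ) ^ (β - 1)) (Set.Ioo τ t) := by
  have h2 := ((gg_ii hβ0 hβ1 hτt).const_mul (t - τ)⁻¹)
  rw [intervalIntegrable_iff_integrableOn_Ioc_of_le (le_of_lt hτt)] at h2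
  refine IntegrableOn.mono_set ?_ Set.Ioo_subset_Ioc_self
  exact h2.congr_fun (fun s hs => (key_eqOn hβ0 hβ1 hτt (Set.Ioc_subset_Icc_self hs)).symm)
    measurableSet_Ioc

lemma sub_integral {β τ t : ℝ} (hβ0 : 0 < β) (hβ1 : β < 1) (hτt : τ < t) :
    ∫ s in Set.Ioo τ t, (t - s) ^ (-β) * (s - τ) ^ (β - 1) = betaC β := by
  have hd0 : (0:ℝ) < t - τ := by linarith
  rw [Measure.restrict_congr_set Ioo_ae_eq_Ioc, ← intervalIntegral.integral_of_le (le_of_lt hτt),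
    intervalIntegral.integral_congr ((Set.uIcc_of_le (le_of_lt hτt)).symm ▸ key_eqOn hβ0 hβ1 hτt)]
  have harg : ∀ s : ℝ, (t - τ)⁻¹ * (s - τ) = (t - τ)⁻¹ * s + -((t - τ)⁻¹ * τ) := by
    intro s; ring
  simp only [harg]
  rw [intervalIntegral.integral_const_mul]
  rw [intervalIntegral.integral_comp_mul_add
    (fun x : ℝ => (1 - x) ^ (-β) * x ^ (β - 1)) (inv_ne_zero (ne_of_gt hd0)) (-((t - τ)⁻¹ * τ))]
  have e1 : (t - τ)⁻¹ * τ + -((t - τ)⁻¹ * τ) = 0 := by ring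
  have e2 : (t - τ)⁻¹ * t + -((t - τ)⁻¹ * τ) = 1 := by field_simp; ring
  rw [e1, e2, inv_inv, smul_eq_mul, ← mul_assoc, inv_mul_cancel₀ (ne_of_gt hd0), one_mul,
    intervalIntegral.integral_of_le (by norm_num : (0:ℝ) ≤ 1),
    ← Measure.restrict_congr_set Ioo_ae_eq_Ioc, betaC]


lemma main_step {H : Type*} [NormedAddCommGroup H] [NormedSpace ℝ H] [CompleteSpace H]
    {β t : ℝ} (hβ0 : 0 < β) (hβ1 : β < 1) (ht : 0 < t) {v : ℝ → H}
    (hvi : Integrable v volume)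
    (hg : ∀ᵐ s ∂(volume.restrict (Set.Ioo 0 t)),
      ∫ τ in Set.Ioo 0 s, (s - τ) ^ (β - 1) • v τ = 0) :
    ∫ τ in Set.Ioo 0 t, v τ = 0 := by
  set μA := volume.restrict (Set.Ioo 0 t) with hμA
  set U : Set (ℝ × ℝ) := {p | p.2 < p.1} ∩ {p | p.1 < t} with hU
  have hUopen : IsOpen U :=
    (isOpen_lt continuous_snd continuous_fst).inter (isOpen_lt continuous_fst continuous_const)
  set F : ℝ × ℝ → H :=
    U.indicator (fun p => ((t - p.1) ^ (-β) * (p.1 - p.2) ^ (β - 1)) • v p.2) with hF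
  -- measurability
  have hFm : AEStronglyMeasurable F (μA.prod μA) := by
    rw [hF, aestronglyMeasurable_indicator_iff hUopen.measurableSet]
    apply AEStronglyMeasurable.smul
    · refine ContinuousOn.aestronglyMeasurable ?_ hUopen.measurableSet
      refine ContinuousOn.mul ?_ ?_
      · exact (continuous_const.sub continuous_fst).continuousOn.rpow_const
          (fun p hp => Or.inl (ne_of_gt (sub_pos.2 hp.2)))
      · exact (continuous_fst.sub continuous_snd).continuousOn.rpow_const
          (fun p hp => Or.inl (ne_of_gt (sub_pos.2 hp.1)))
    · exact (hvi.aestronglyMeasurable.restrict.comp_snd (μ := μA)).restrict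
  -- sections in s, for fixed τ
  have hFsec : ∀ τ ∈ Set.Ioo 0 t, ∀ s : ℝ, F (s, τ) =
      (Set.Ioo τ t).indicator (fun s => ((t - s) ^ (-β) * (s - τ) ^ (β - 1)) • v τ) s := by
    intro τ hτ s
    by_cases h : s ∈ Set.Ioo τ t
    · rw [Set.indicator_of_mem h, hF, Set.indicator_of_mem]
      exact ⟨h.1, h.2⟩
    · rw [Set.indicator_of_notMem h, hF, Set.indicator_of_notMem]
      intro hc
      exact h ⟨hc.1, hc.2⟩
  have hrr : ∀ τ ∈ Set.Ioo 0 t,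
      μA.restrict (Set.Ioo τ t) = volume.restrict (Set.Ioo τ t) := by
    intro τ hτ
    rw [hμA, Measure.restrict_restrict measurableSet_Ioo,
      Set.inter_eq_left.mpr (fun x hx => Set.mem_Ioo.mpr
        ⟨lt_trans hτ.1 (Set.mem_Ioo.mp hx).1, (Set.mem_Ioo.mp hx).2⟩)]
  have hsec : ∀ τ ∈ Set.Ioo 0 t, Integrable (fun s => F (s, τ)) μA := by
    intro τ hτ
    simp only [hFsec τ hτ]
    rw [integrable_indicator_iff measurableSet_Ioo]
    have h' := (sub_integrable hβ0 hβ1 hτ.2).smul_const (v τ)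
    unfold MeasureTheory.IntegrableOn at h' ⊢
    rwa [hrr τ hτ]
  have hnormint : ∀ τ ∈ Set.Ioo 0 t,
      ∫ s, ‖F (s, τ)‖ ∂μA = betaC β * ‖v τ‖ := by
    intro τ hτ
    simp only [hFsec τ hτ]
    simp_rw [norm_indicator_eq_indicator_norm]
    rw [MeasureTheory.integral_indicator measurableSet_Ioo, hrr τ hτ]
    rw [setIntegral_congr_fun measurableSet_Ioo
      (g := fun s => ((t - s) ^ (-β) * (s - τ) ^ (β - 1)) * ‖v τ‖) ?_]
    · rw [MeasureTheory.integral_mul_const, sub_integral hβ0 hβ1 hτ.2]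
    · intro s hs
      simp only [norm_smul, Real.norm_eq_abs]
      rw [abs_of_nonneg]
      exact mul_nonneg (Real.rpow_nonneg (by linarith [hs.2]) _)
        (Real.rpow_nonneg (by linarith [hs.1]) _)
  -- integrability on the product
  have hF_int : Integrable F (μA.prod μA) := by
    rw [integrable_prod_iff' hFm]
    constructor
    · filter_upwards [ae_restrict_mem measurableSet_Ioo] with τ hτ using hsec τ hτ
    · refine Integrable.congr ((hvi.norm.const_mul (betaC β)).restrict (s := Set.Ioo 0 t)) ?_
      filter_upwards [ae_restrict_mem measurableSet_Ioo] with τ hτ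
      exact (hnormint τ hτ).symm
  have hswap := integral_integral_swap (f := fun s τ => F (s, τ)) (μ := μA) (ν := μA)
    (by exact hF_int)
  -- LHS is zero
  have hLHS : ∫ s, (∫ τ, F (s, τ) ∂μA) ∂μA = 0 := by
    apply integral_eq_zero_of_ae
    filter_upwards [ae_restrict_mem measurableSet_Ioo, hg] with s hs hgs
    have hsec' : ∀ τ : ℝ, F (s, τ) =
        (Set.Iio s).indicator (fun τ => ((t - s) ^ (-β) * (s - τ) ^ (β - 1)) • v τ) τ := by
      intro τ
      by_cases h : τ ∈ Set.Iio s
      · rw [Set.indicator_of_mem h, hF, Set.indicator_of_mem]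
        exact ⟨h, hs.2⟩
      · rw [Set.indicator_of_notMem h, hF, Set.indicator_of_notMem]
        intro hc
        exact h hc.1
    have hset : Set.Iio s ∩ Set.Ioo 0 t = Set.Ioo 0 s := by
      ext x
      simp only [Set.mem_inter_iff, Set.mem_Iio, Set.mem_Ioo]
      constructor
      · rintro ⟨h1, h2, h3⟩; exact ⟨h2, h1⟩
      · rintro ⟨h1, h2⟩; exact ⟨h2, h1, lt_trans h2 hs.2⟩
    simp only [hsec']
    rw [MeasureTheory.integral_indicator measurableSet_Iio, hμA,
      Measure.restrict_restrict measurableSet_Iio, hset]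
    simp_rw [mul_smul]
    rw [MeasureTheory.integral_smul, hgs, smul_zero]
    rfl
  -- RHS
  have hRHS : ∫ τ, (∫ s, F (s, τ) ∂μA) ∂μA = betaC β • ∫ τ in Set.Ioo 0 t, v τ := by
    rw [← MeasureTheory.integral_smul]
    apply MeasureTheory.integral_congr_ae
    filter_upwards [ae_restrict_mem measurableSet_Ioo] with τ hτ
    simp only [hFsec τ hτ]
    rw [MeasureTheory.integral_indicator measurableSet_Ioo, hrr τ hτ, _root_.integral_smul_const,
      sub_integral hβ0 hβ1 hτ.2]
  have h0 : betaC β • (∫ τ in Set.Ioo 0 t, v τ) = 0 := by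
    rw [← hRHS, ← hswap, hLHS]
  rcases smul_eq_zero.mp h0 with h | h
  · exact absurd h (ne_of_gt (betaC_pos hβ0 hβ1))
  · exact h


lemma primitive_lemma {H : Type*} [NormedAddCommGroup H] [NormedSpace ℝ H] [CompleteSpace H]
    {T : ℝ} (hT : 0 < T) {v : ℝ → H} (hvi : Integrable v volume)
    (hsupp : ∀ x, x ∉ Set.Ioo 0 T → v x = 0)
    (hG : ∀ᵐ t ∂(volume.restrict (Set.Ioo 0 T)), ∫ τ in Set.Ioo 0 t, v τ = 0) :
    ∀ᵐ x ∂(volume : Measure ℝ), v x = 0 := by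
  have hIab : ∀ a b : ℝ, IntervalIntegrable v volume a b := fun a b => hvi.intervalIntegrable
  set G : ℝ → H := fun r => ∫ s in (0:ℝ)..r, v s with hGdef
  have hGcont : Continuous G := intervalIntegral.continuous_primitive hIab 0
  -- G is a.e. zero on (0,T)
  have hGae : ∀ᵐ t ∂(volume.restrict (Set.Ioo 0 T)), G t = (fun _ => (0:H)) t := by
    filter_upwards [hG, ae_restrict_mem measurableSet_Ioo] with t h1 h2
    rw [hGdef]
    simp only
    rw [intervalIntegral.integral_of_le (le_of_lt h2.1),
      ← Measure.restrict_congr_set Ioo_ae_eq_Ioc]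
    exact h1
  have hGIoo : Set.EqOn G (fun _ => (0:H)) (Set.Ioo 0 T) :=
    Measure.eqOn_Ioo_of_ae_eq volume hGae hGcont.continuousOn continuousOn_const
  have hGIcc : Set.EqOn G (fun _ => (0:H)) (Set.Icc 0 T) := by
    have := hGIoo.closure hGcont continuous_const
    rwa [closure_Ioo (ne_of_lt hT)] at this
  -- G vanishes everywhere
  have hGall : ∀ r : ℝ, G r = 0 := by
    intro r
    rcases le_or_gt r 0 with h | h
    · rw [hGdef]
      simp only
      rw [intervalIntegral.integral_symm]
      have : EqOn v (fun _ => (0:H)) (Set.uIcc r 0) := by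
        intro x hx
        rw [Set.uIcc_of_le h] at hx
        exact hsupp x (fun hc => absurd (lt_of_lt_of_le hc.1 hx.2) (lt_irrefl 0))
      rw [intervalIntegral.integral_congr this]
      simp
    · rcases le_or_gt r T with h2 | h2
      · exact hGIcc ⟨le_of_lt h, h2⟩
      · have hadd := intervalIntegral.integral_add_adjacent_intervals (hIab 0 T) (hIab T r)
        have hTr : ∫ x in T..r, v x = 0 := by
          have : EqOn v (fun _ => (0:H)) (Set.uIcc T r) := by
            intro x hx
            rw [Set.uIcc_of_le (le_of_lt h2)] at hx
            exact hsupp x (fun hc => absurd hc.2 (not_lt.mpr hx.1))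
          rw [intervalIntegral.integral_congr this]
          simp
        have hGT : G T = 0 := hGIcc ⟨le_of_lt hT, le_refl T⟩
        rw [hGdef]
        simp only
        rw [← hadd, hTr]
        simpa using hGT
  -- interval integrals all vanish
  have hint : ∀ a b : ℝ, ∫ s in a..b, v s = 0 := by
    intro a b
    have hadd := intervalIntegral.integral_add_adjacent_intervals (hIab a 0) (hIab 0 b)
    have ha0 : ∫ s in a..(0:ℝ), v s = 0 := by
      rw [intervalIntegral.integral_symm, show (∫ s in (0:ℝ)..a, v s) = G a from rfl,
        hGall a, neg_zero]
    have hb0 : (∫ s in (0:ℝ)..b, v s) = 0 := hGall b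
    rw [ha0, hb0] at hadd
    simpa using hadd.symm
  -- Lebesgue differentiation
  have hld := IsUnifLocDoublingMeasure.ae_tendsto_average (μ := (volume : Measure ℝ))
    hvi.locallyIntegrable 1
  filter_upwards [hld] with x hx
  have hx' := hx (fun _ : ℝ => x) id Filter.tendsto_id ?_
  · -- the averages are all zero
    have hzero : ∀ δ : ℝ, 0 < δ → (⨍ y in Metric.closedBall x δ, v y) = 0 := by
      intro δ hδ
      rw [setAverage_eq, Real.closedBall_eq_Icc]
      have : ∫ y in Set.Icc (x - δ) (x + δ), v y = 0 := by
        rw [← Measure.restrict_congr_set Ioc_ae_eq_Icc,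
          ← intervalIntegral.integral_of_le (by linarith)]
        exact hint _ _
      rw [this, smul_zero]
    have h2 : Filter.Tendsto (fun δ : ℝ => ⨍ y in Metric.closedBall x δ, v y) (nhdsWithin 0 (Set.Ioi 0)) (nhds 0) := by
      apply Filter.Tendsto.congr' _ tendsto_const_nhds
      filter_upwards [self_mem_nhdsWithin] with δ hδ
      exact (hzero δ hδ).symm
    exact (tendsto_nhds_unique hx' h2)
  · filter_upwards [self_mem_nhdsWithin] with δ hδ
    simp only [one_mul]
    exact Metric.mem_closedBall_self (le_of_lt hδ)
/-- The Riemann–Liouville fractional integral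
`I^β(f)(t) = (1/Γ(β)) ∫_0^t (t-τ)^{β-1} f(τ) dτ` for a Hilbert-space valued `f`. -/
noncomputable def riemannLiouville {H : Type*} [NormedAddCommGroup H]
    [InnerProductSpace ℝ H] (β : ℝ) (f : ℝ → H) (t : ℝ) : H :=
  (1 / Real.Gamma β) • ∫ τ in (0 : ℝ)..t, (t - τ) ^ (β - 1) • f τ

/-- For a separable Hilbert space `H`, `T > 0` and `0 < β ≤ 1`, the Riemann–Liouville
operator `I^β` is injective on `L²((0,T);H)`: if `I^β(u) = 0` a.e. on `(0,T)`, then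
`u = 0` a.e. on `(0,T)`. -/
theorem riemannLiouville_injective {H : Type*} [NormedAddCommGroup H]
    [InnerProductSpace ℝ H] [CompleteSpace H] [TopologicalSpace.SeparableSpace H]
    (T β : ℝ) (hT : 0 < T) (hβ₀ : 0 < β) (hβ₁ : β ≤ 1) (u : ℝ → H)
    (hu : MemLp u 2 (volume.restrict (Set.Ioo 0 T)))
    (h0 : ∀ᵐ t ∂(volume.restrict (Set.Ioo 0 T)), riemannLiouville β u t = 0) :
    ∀ᵐ t ∂(volume.restrict (Set.Ioo 0 T)), u t = 0 := by
  have hfin : IsFiniteMeasure (volume.restrict (Set.Ioo 0 T)) := by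
    constructor
    rw [Measure.restrict_apply_univ, Real.volume_Ioo]
    exact ENNReal.ofReal_lt_top
  have hui : IntegrableOn u (Set.Ioo 0 T) volume := hu.integrable (by norm_num)
  set v : ℝ → H := (Set.Ioo 0 T).indicator u with hv
  have hvi : Integrable v volume := by
    rw [hv, integrable_indicator_iff measurableSet_Ioo]
    exact hui
  have hsupp : ∀ x, x ∉ Set.Ioo 0 T → v x = 0 := fun x hx => Set.indicator_of_notMem hx u
  have hveq : ∀ s : ℝ, s ∈ Set.Ioo 0 T → ∀ c : ℝ,
      (∫ τ in Set.Ioo 0 s, (s - τ) ^ c • v τ) = ∫ τ in Set.Ioo 0 s, (s - τ) ^ c • u τ := by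
    intro s hs c
    apply setIntegral_congr_fun measurableSet_Ioo
    intro τ hτ
    simp only
    rw [hv, Set.indicator_of_mem (Set.mem_Ioo.mpr ⟨(Set.mem_Ioo.mp hτ).1, lt_trans (Set.mem_Ioo.mp hτ).2 hs.2⟩) u]
  -- from the hypothesis: the fractional integral of `v` vanishes a.e.
  have hg : ∀ᵐ s ∂(volume.restrict (Set.Ioo 0 T)),
      ∫ τ in Set.Ioo 0 s, (s - τ) ^ (β - 1) • v τ = 0 := by
    filter_upwards [h0, ae_restrict_mem measurableSet_Ioo] with s hRL hs
    rw [hveq s hs]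
    rw [riemannLiouville] at hRL
    rcases smul_eq_zero.mp hRL with h | h
    · exact absurd h (by
        simp only [one_div, ne_eq, inv_eq_zero]
        exact ne_of_gt (Real.Gamma_pos_of_pos hβ₀))
    · rw [intervalIntegral.integral_of_le (le_of_lt hs.1),
        ← Measure.restrict_congr_set Ioo_ae_eq_Ioc] at h
      exact h
  -- the primitive of `v` vanishes a.e. on `(0,T)`
  have hG : ∀ᵐ t ∂(volume.restrict (Set.Ioo 0 T)), ∫ τ in Set.Ioo 0 t, v τ = 0 := by
    rcases lt_or_eq_of_le hβ₁ with hβlt | hβeq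
    · filter_upwards [ae_restrict_mem measurableSet_Ioo] with t ht
      exact main_step hβ₀ hβlt ht.1 hvi
        (ae_restrict_of_ae_restrict_of_subset (Set.Ioo_subset_Ioo_right (le_of_lt ht.2)) hg)
    · subst hβeq
      filter_upwards [hg] with t hgt
      simpa [Real.rpow_zero] using hgt
  have hv0 := primitive_lemma hT hvi hsupp hG
  filter_upwards [ae_restrict_of_ae hv0, ae_restrict_mem measurableSet_Ioo] with t h1 h2
  rwa [hv, Set.indicator_of_mem h2 u] at h1
end

section
/- Let α ∈ (1,2) and λ > 0. Then for every t > 0 the Caputo derivative identity ∂_t^α E_α(−λ t^α) = −λ E_α(−λ t^α) holds; explicitly, (1/Γ(2−α)) ∫_0^t (t−τ)^{1−α} ( −λ τ^{α−2} E_{α,α−1}(−λ τ^α) ) dτ = −λ E_α(−λ t^α), where −λ τ^{α−2} E_{α,α−1}(−λ τ^α) is the second derivative of τ ↦ E_α(−λ τ^α) on (0,∞). -/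
set_option maxHeartbeats 1000000

open Real MeasureTheory intervalIntegral Set

lemma realBeta_integrable {a b : ℝ} (ha : 0 < a) (hb : 0 < b) :
    IntervalIntegrable (fun x : ℝ => x ^ (a - 1) * (1 - x) ^ (b - 1)) volume 0 1 := by
  have h := Complex.betaIntegral_convergent (u := (a : ℂ)) (v := (b : ℂ)) (by simpa) (by simpa)
  have h2 : IntervalIntegrable (fun x : ℝ =>
      RCLike.re ((x : ℂ) ^ ((a : ℂ) - 1) * ((1 : ℂ) - x) ^ ((b : ℂ) - 1))) volume 0 1 :=
    ⟨h.1.re, h.2.re⟩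
  apply h2.congr_ae
  filter_upwards [ae_restrict_mem measurableSet_Ioc] with x hx
  rw [uIoc_of_le (by norm_num : (0:ℝ) ≤ 1)] at hx
  have hx0 : (0:ℝ) ≤ x := le_of_lt hx.1
  have hx1 : (0:ℝ) ≤ 1 - x := by linarith [hx.2]
  rw [show ((a : ℂ) - 1) = ((a - 1 : ℝ) : ℂ) by push_cast; ring,
    show ((b : ℂ) - 1) = ((b - 1 : ℝ) : ℂ) by push_cast; ring,
    show ((1 : ℂ) - (x:ℝ)) = ((1 - x : ℝ) : ℂ) by push_cast; ring,
    ← Complex.ofReal_cpow hx0, ← Complex.ofReal_cpow hx1, ← Complex.ofReal_mul]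
  simp

lemma realBeta {a b : ℝ} (ha : 0 < a) (hb : 0 < b) :
    ∫ x in (0:ℝ)..1, x ^ (a - 1) * (1 - x) ^ (b - 1)
      = Real.Gamma a * Real.Gamma b / Real.Gamma (a + b) := by
  have h := Complex.Gamma_mul_Gamma_eq_betaIntegral (s := (a : ℂ)) (t := (b : ℂ))
    (by simpa) (by simpa)
  have hbeta : Complex.betaIntegral (a : ℂ) (b : ℂ)
      = ((∫ x in (0:ℝ)..1, x ^ (a - 1) * (1 - x) ^ (b - 1) : ℝ) : ℂ) := by
    rw [Complex.betaIntegral, ← intervalIntegral.integral_ofReal]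
    apply intervalIntegral.integral_congr
    intro x hx
    rw [uIcc_of_le (by norm_num : (0:ℝ) ≤ 1)] at hx
    have hx0 : (0:ℝ) ≤ x := hx.1
    have hx1 : (0:ℝ) ≤ 1 - x := by linarith [hx.2]
    beta_reduce
    rw [Complex.ofReal_mul, Complex.ofReal_cpow hx0, Complex.ofReal_cpow hx1]
    push_cast
    ring
  rw [hbeta] at h
  have hGab : Real.Gamma (a + b) ≠ 0 := (Real.Gamma_pos_of_pos (by linarith)).ne'
  have := h
  rw [show ((a:ℂ) + b) = ((a + b : ℝ) : ℂ) by push_cast; ring] at this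
  rw [Complex.Gamma_ofReal, Complex.Gamma_ofReal, Complex.Gamma_ofReal] at this
  field_simp
  rw [mul_comm]
  exact_mod_cast this.symm

lemma realBeta_scaled_integrable {a b t : ℝ} (ha : 0 < a) (hb : 0 < b) (ht : 0 < t) :
    IntervalIntegrable (fun τ : ℝ => τ ^ (a - 1) * (t - τ) ^ (b - 1)) volume 0 t := by
  have h0 := realBeta_integrable ha hb
  have h1 : IntervalIntegrable (fun x : ℝ => (t⁻¹ * x) ^ (a - 1) * (1 - t⁻¹ * x) ^ (b - 1))
      volume 0 t := by
    have := h0.comp_mul_left (c := t⁻¹)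
    simpa [ht.ne'] using this
  have h2 := h1.mul_const (t ^ (a - 1) * t ^ (b - 1))
  apply h2.congr_ae
  filter_upwards [ae_restrict_mem measurableSet_uIoc] with τ hτ
  rw [uIoc_of_le ht.le] at hτ
  have hτ0 : (0:ℝ) ≤ τ := hτ.1.le
  have h1τ : (0:ℝ) ≤ 1 - t⁻¹ * τ := by
    rw [sub_nonneg]
    rw [inv_mul_le_iff₀ ht, mul_one]
    exact hτ.2
  have e1 : τ ^ (a-1) = (t⁻¹ * τ) ^ (a-1) * t ^ (a-1) := by
    rw [← Real.mul_rpow (by positivity) ht.le]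
    congr 1; field_simp
  have e2 : (t - τ) ^ (b-1) = (1 - t⁻¹ * τ) ^ (b-1) * t ^ (b-1) := by
    rw [← Real.mul_rpow h1τ ht.le]
    congr 1; field_simp
  rw [e1, e2]; ring

lemma realBeta_scaled {a b t : ℝ} (ha : 0 < a) (hb : 0 < b) (ht : 0 < t) :
    ∫ τ in (0:ℝ)..t, τ ^ (a - 1) * (t - τ) ^ (b - 1)
      = t ^ (a + b - 1) * (Real.Gamma a * Real.Gamma b / Real.Gamma (a + b)) := by
  have hsub := intervalIntegral.integral_comp_mul_left
    (fun τ : ℝ => τ ^ (a - 1) * (t - τ) ^ (b - 1)) (c := t) ht.ne' (a := 0) (b := 1)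
  rw [mul_zero, mul_one] at hsub
  have key : ∫ x in (0:ℝ)..1, (t * x) ^ (a - 1) * (t - t * x) ^ (b - 1)
      = t ^ (a + b - 2) * (Real.Gamma a * Real.Gamma b / Real.Gamma (a + b)) := by
    have : ∀ x ∈ uIcc (0:ℝ) 1, (t * x) ^ (a - 1) * (t - t * x) ^ (b - 1)
        = t ^ (a + b - 2) * (x ^ (a - 1) * (1 - x) ^ (b - 1)) := by
      intro x hx
      rw [uIcc_of_le (by norm_num : (0:ℝ) ≤ 1)] at hx
      rw [show t - t * x = t * (1 - x) by ring,
        Real.mul_rpow ht.le hx.1, Real.mul_rpow ht.le (by linarith [hx.2]),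
        show a + b - 2 = (a - 1) + (b - 1) by ring, Real.rpow_add ht]
      ring
    rw [intervalIntegral.integral_congr this, intervalIntegral.integral_const_mul,
      realBeta ha hb]
  rw [key] at hsub
  have : (∫ τ in (0:ℝ)..t, τ ^ (a - 1) * (t - τ) ^ (b - 1))
      = t * (t ^ (a + b - 2) * (Real.Gamma a * Real.Gamma b / Real.Gamma (a + b))) := by
    rw [hsub, smul_eq_mul]
    field_simp
  rw [this, ← mul_assoc]
  congr 1
  rw [show a + b - 1 = 1 + (a + b - 2) by ring, Real.rpow_add ht, Real.rpow_one]

lemma sq_le_four_pow (k : ℕ) : ((k:ℝ) + 1) ^ 2 ≤ 4 ^ k := by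
  induction k with
  | zero => norm_num
  | succ n ih =>
    push_cast
    calc ((n:ℝ) + 1 + 1) ^ 2 ≤ 4 * ((n:ℝ) + 1) ^ 2 := by nlinarith [Nat.cast_nonneg (α := ℝ) n]
    _ ≤ 4 * 4 ^ n := by linarith
    _ = 4 ^ (n + 1) := by ring

lemma summable_sq_div_factorial (c : ℝ) (hc : 0 ≤ c) :
    Summable (fun k : ℕ => c ^ k * ((k:ℝ) + 1) ^ 2 / (k.factorial : ℝ)) := by
  apply Summable.of_nonneg_of_le (fun k => by positivity)
    (f := fun k => (4 * c) ^ k / (k.factorial : ℝ))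
  · intro k
    rw [mul_pow, div_le_div_iff_of_pos_right (by positivity)]
    calc c ^ k * ((k:ℝ) + 1) ^ 2 ≤ c ^ k * 4 ^ k := by
          exact mul_le_mul_of_nonneg_left (sq_le_four_pow k) (by positivity)
      _ = 4 ^ k * c ^ k := by ring
  · exact Real.summable_pow_div_factorial (4 * c)

lemma summable_ml_aux {α : ℝ} (hα : 1 < α) {b : ℝ} (hb : 0 < b) {c : ℝ} (hc : 0 ≤ c) :
    Summable (fun k : ℕ => c ^ k * ((k:ℝ) + 1) ^ 2 / Real.Gamma (α * k + b)) := by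
  set N : ℕ := ⌈(1 - b) / (α - 1)⌉₊ + 1 with hN
  rw [← summable_nat_add_iff N]
  apply Summable.of_nonneg_of_le
    (f := fun k : ℕ => c ^ (k + N) * (((k + N : ℕ) :ℝ) + 1) ^ 2 / ((k + N).factorial : ℝ))
  · intro k
    have : 0 < Real.Gamma (α * (k + N : ℕ) + b) := by
      apply Real.Gamma_pos_of_pos
      positivity
    positivity
  · intro k
    have hm : ((k + N : ℕ) : ℝ) ≥ 1 := by
      have : 1 ≤ k + N := by omega
      exact_mod_cast this
    have hkey : ((k + N : ℕ) : ℝ) + 1 ≤ α * (k + N : ℕ) + b := by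
      have h1 : ((1 - b) / (α - 1)) ≤ (N : ℝ) := by
        calc ((1 - b) / (α - 1)) ≤ (⌈(1 - b) / (α - 1)⌉₊ : ℝ) := Nat.le_ceil _
          _ ≤ (N : ℝ) := by rw [hN]; push_cast; linarith
      have h2 : (N : ℝ) ≤ ((k + N : ℕ) : ℝ) := by
        have : N ≤ k + N := by omega
        exact_mod_cast this
      have h3 : (1 - b) ≤ (α - 1) * ((k + N : ℕ) : ℝ) := by
        rw [div_le_iff₀ (by linarith)] at h1
        nlinarith
      nlinarith
    have hΓ : ((k + N).factorial : ℝ) ≤ Real.Gamma (α * (k + N : ℕ) + b) := by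
      rw [← Real.Gamma_nat_eq_factorial]
      apply Real.Gamma_strictMonoOn_Ici.monotoneOn
      · simp only [mem_Ici]; push_cast; push_cast at hm; linarith
      · simp only [mem_Ici]; push_cast; push_cast at hkey hm; linarith
      · push_cast; push_cast at hkey; linarith
    apply div_le_div_of_nonneg_left (by positivity) (by positivity) hΓ
  · exact (summable_nat_add_iff N).mpr (summable_sq_div_factorial c hc)

lemma ml_deriv2 {α lam : ℝ} (hα₁ : 1 < α) (hα₂ : α < 2) (hlam : 0 < lam)
    {τ : ℝ} (hτ : 0 < τ) :
    deriv (deriv (fun s : ℝ => mittagLeffler α 1 (-lam * s ^ α))) τ =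
      -lam * τ ^ (α - 2) * mittagLeffler α (α - 1) (-lam * τ ^ α) := by
  have hα0 : 0 < α := by linarith
  set R : ℝ := τ + 1 with hR
  have hR1 : 1 < R := by simp [hR]; linarith
  have hRpos : 0 < R := by linarith
  have hτR : τ < R := by simp [hR]
  have hΓ : ∀ k : ℕ, 0 < Real.Gamma (α * k + 1) := fun k =>
    Real.Gamma_pos_of_pos (by positivity)
  set F1 : ℕ → ℝ → ℝ := fun k s => ((-lam) ^ k / Real.Gamma (α * k + 1)) * s ^ (α * k)
    with hF1
  set F2 : ℕ → ℝ → ℝ := fun k s =>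
    ((-lam) ^ k / Real.Gamma (α * k + 1)) * (α * k * s ^ (α * k - 1)) with hF2
  set F3 : ℕ → ℝ → ℝ := fun k s =>
    ((-lam) ^ k / Real.Gamma (α * k + 1)) * (α * k * ((α * k - 1) * s ^ (α * k - 1 - 1)))
    with hF3
  -- norms
  have hnorm2 : ∀ (k : ℕ) (y : ℝ), 0 < y →
      ‖F2 k y‖ = lam ^ k / Real.Gamma (α * k + 1) * (α * k * y ^ (α * k - 1)) := by
    intro k y hy
    simp only [hF2, Real.norm_eq_abs, abs_mul, abs_div, abs_pow, abs_neg,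
      abs_of_pos hlam, abs_of_pos (hΓ k),
      abs_of_nonneg (show (0:ℝ) ≤ α * k by positivity),
      abs_of_nonneg (Real.rpow_nonneg hy.le (α * k - 1))]
  have hnorm3 : ∀ (k : ℕ) (y : ℝ), 0 < y →
      ‖F3 k y‖ = lam ^ k / Real.Gamma (α * k + 1) *
        (α * k * (|α * k - 1| * y ^ (α * k - 1 - 1))) := by
    intro k y hy
    simp only [hF3, Real.norm_eq_abs, abs_mul, abs_div, abs_pow, abs_neg,
      abs_of_pos hlam, abs_of_pos (hΓ k),
      abs_of_nonneg (show (0:ℝ) ≤ α * k by positivity),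
      abs_of_nonneg (Real.rpow_nonneg hy.le (α * k - 1 - 1))]
  -- summable bounds
  have hu1 : Summable (fun k : ℕ =>
      α * ((lam * R ^ α) ^ k * ((k:ℝ) + 1) ^ 2 / Real.Gamma (α * k + 1))) :=
    (summable_ml_aux hα₁ one_pos (by positivity)).mul_left α
  have hbound2 : ∀ (k : ℕ) (y : ℝ), y ∈ Set.Ioo (0:ℝ) R →
      ‖F2 k y‖ ≤ α * ((lam * R ^ α) ^ k * ((k:ℝ) + 1) ^ 2 / Real.Gamma (α * k + 1)) := by
    intro k y hy
    rw [hnorm2 k y hy.1]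
    have hy0 : (0:ℝ) ≤ y := hy.1.le
    have hRk : R ^ (α * (k:ℝ)) = (R ^ α) ^ k := by
      rw [Real.rpow_mul hRpos.le, Real.rpow_natCast]
    have key : α * k * y ^ (α * k - 1) ≤ α * ((k:ℝ) + 1) ^ 2 * R ^ (α * (k:ℝ)) := by
      rcases Nat.eq_zero_or_pos k with hk | hk
      · subst hk
        simp only [Nat.cast_zero, mul_zero, zero_mul]
        positivity
      · have hk1 : (1:ℝ) ≤ (k:ℝ) := by exact_mod_cast hk
        have h1 : y ^ (α * k - 1) ≤ R ^ (α * k - 1) :=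
          Real.rpow_le_rpow hy0 hy.2.le (by nlinarith)
        have h2 : R ^ (α * (k:ℝ) - 1) ≤ R ^ (α * (k:ℝ)) :=
          Real.rpow_le_rpow_of_exponent_le hR1.le (by linarith)
        have h3 : α * (k:ℝ) ≤ α * ((k:ℝ) + 1) ^ 2 := by nlinarith
        have h4 : (0:ℝ) ≤ R ^ (α * (k:ℝ)) := Real.rpow_nonneg hRpos.le _
        calc α * k * y ^ (α * k - 1) ≤ α * k * R ^ (α * (k:ℝ)) := by
              apply mul_le_mul_of_nonneg_left (h1.trans h2) (by positivity)
          _ ≤ α * ((k:ℝ) + 1) ^ 2 * R ^ (α * (k:ℝ)) := mul_le_mul_of_nonneg_right h3 h4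
    calc lam ^ k / Real.Gamma (α * k + 1) * (α * k * y ^ (α * k - 1))
        ≤ lam ^ k / Real.Gamma (α * k + 1) * (α * ((k:ℝ) + 1) ^ 2 * R ^ (α * (k:ℝ))) := by
          apply mul_le_mul_of_nonneg_left key (by positivity)
      _ = α * ((lam * R ^ α) ^ k * ((k:ℝ) + 1) ^ 2 / Real.Gamma (α * k + 1)) := by
          rw [mul_pow, ← hRk]; field_simp
  -- pointwise summability of F1
  have hsum1 : ∀ y : ℝ, 0 ≤ y → Summable (fun k : ℕ => F1 k y) := by
    intro y hy
    apply Summable.of_norm_bounded (summable_ml_aux hα₁ one_pos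
      (show (0:ℝ) ≤ lam * y ^ α by positivity))
    intro k
    have : ‖F1 k y‖ = (lam * y ^ α) ^ k / Real.Gamma (α * k + 1) := by
      have hyk : y ^ (α * (k:ℝ)) = (y ^ α) ^ k := by
        rw [Real.rpow_mul hy, Real.rpow_natCast]
      simp only [hF1, Real.norm_eq_abs, abs_mul, abs_div, abs_pow, abs_neg,
        abs_of_pos hlam, abs_of_pos (hΓ k),
        abs_of_nonneg (Real.rpow_nonneg hy (α * k))]
      rw [hyk, mul_pow]
      ring
    rw [this]
    have hone : (1:ℝ) ≤ ((k:ℝ) + 1) ^ 2 := by nlinarith [Nat.cast_nonneg (α := ℝ) k]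
    rw [div_le_div_iff_of_pos_right (hΓ k)]
    nlinarith [pow_nonneg (show (0:ℝ) ≤ lam * y ^ α by positivity) k]
  -- first derivative of the series on Ioo 0 R
  have key1 : ∀ y ∈ Set.Ioo (0:ℝ) R, HasDerivAt (fun z => ∑' k : ℕ, F1 k z)
      (∑' k : ℕ, F2 k y) y := by
    intro y hy
    apply hasDerivAt_tsum_of_isPreconnected hu1 isOpen_Ioo
      (convex_Ioo (0:ℝ) R).isPreconnected
      (g := F1) (g' := F2) (y₀ := τ)
    · intro k z hz
      have hd : HasDerivAt (fun s : ℝ => s ^ (α * (k:ℝ)))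
          (α * k * z ^ (α * k - 1)) z :=
        Real.hasDerivAt_rpow_const (Or.inl hz.1.ne')
      simpa [hF1, hF2] using hd.const_mul ((-lam) ^ k / Real.Gamma (α * k + 1))
    · exact hbound2
    · exact ⟨hτ, hτR⟩
    · exact hsum1 τ hτ.le
    · exact hy
  -- second derivative on Ioo (τ/2) R
  set ε : ℝ := τ / 2 with hε
  have hεpos : 0 < ε := by positivity
  have hετ : ε < τ := by rw [hε]; linarith
  have hu2 : Summable (fun k : ℕ =>
      (6 * ε ^ (-2:ℝ)) * ((lam * ε ^ α) ^ k * ((k:ℝ) + 1) ^ 2 / Real.Gamma (α * k + 1))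
      + (6 * R ^ (-2:ℝ)) * ((lam * R ^ α) ^ k * ((k:ℝ) + 1) ^ 2 / Real.Gamma (α * k + 1))) :=
    Summable.add
      ((summable_ml_aux hα₁ one_pos (by positivity)).mul_left _)
      ((summable_ml_aux hα₁ one_pos (by positivity)).mul_left _)
  have hbound3 : ∀ (k : ℕ), ∀ y ∈ Set.Ioo ε R, ‖F3 k y‖ ≤
      (6 * ε ^ (-2:ℝ)) * ((lam * ε ^ α) ^ k * ((k:ℝ) + 1) ^ 2 / Real.Gamma (α * k + 1))
      + (6 * R ^ (-2:ℝ)) * ((lam * R ^ α) ^ k * ((k:ℝ) + 1) ^ 2 / Real.Gamma (α * k + 1)) := by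
    intro k y hy
    have hy0 : 0 < y := hεpos.trans hy.1
    rw [hnorm3 k y hy0]
    have hεk : ε ^ (α * (k:ℝ)) = (ε ^ α) ^ k := by
      rw [Real.rpow_mul hεpos.le, Real.rpow_natCast]
    have hRk : R ^ (α * (k:ℝ)) = (R ^ α) ^ k := by
      rw [Real.rpow_mul hRpos.le, Real.rpow_natCast]
    have hyb : y ^ (α * k - 1 - 1) ≤
        ε ^ (-2:ℝ) * (ε ^ α) ^ k + R ^ (-2:ℝ) * (R ^ α) ^ k := by
      have hεb : ε ^ (α * (k:ℝ) - 1 - 1) = ε ^ (-2:ℝ) * (ε ^ α) ^ k := by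
        rw [show α * (k:ℝ) - 1 - 1 = (-2:ℝ) + α * k by ring, Real.rpow_add hεpos, hεk]
      have hRb : R ^ (α * (k:ℝ) - 1 - 1) = R ^ (-2:ℝ) * (R ^ α) ^ k := by
        rw [show α * (k:ℝ) - 1 - 1 = (-2:ℝ) + α * k by ring, Real.rpow_add hRpos, hRk]
      rcases le_or_gt 0 (α * (k:ℝ) - 1 - 1) with hp | hp
      · have h1 : y ^ (α * k - 1 - 1) ≤ R ^ (α * (k:ℝ) - 1 - 1) :=
          Real.rpow_le_rpow hy0.le hy.2.le hp
        have h2 : (0:ℝ) ≤ ε ^ (-2:ℝ) * (ε ^ α) ^ k := by positivity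
        rw [hRb] at h1; linarith
      · have h1 : y ^ (α * k - 1 - 1) ≤ ε ^ (α * (k:ℝ) - 1 - 1) :=
          Real.rpow_le_rpow_of_nonpos hεpos hy.1.le hp.le
        have h2 : (0:ℝ) ≤ R ^ (-2:ℝ) * (R ^ α) ^ k := by positivity
        rw [hεb] at h1; linarith
    have h6 : α * k * |α * k - 1| ≤ 6 * ((k:ℝ) + 1) ^ 2 := by
      have hk0 : (0:ℝ) ≤ (k:ℝ) := Nat.cast_nonneg k
      have ha : α * k ≤ 2 * ((k:ℝ) + 1) := by nlinarith
      have hb : |α * k - 1| ≤ 3 * ((k:ℝ) + 1) := by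
        rw [abs_le]; constructor <;> nlinarith
      calc α * k * |α * k - 1| ≤ (2 * ((k:ℝ) + 1)) * (3 * ((k:ℝ) + 1)) :=
            mul_le_mul ha hb (abs_nonneg _) (by positivity)
        _ = 6 * ((k:ℝ) + 1) ^ 2 := by ring
    have hprod : α * k * (|α * k - 1| * y ^ (α * k - 1 - 1)) ≤
        6 * ((k:ℝ) + 1) ^ 2 * (ε ^ (-2:ℝ) * (ε ^ α) ^ k + R ^ (-2:ℝ) * (R ^ α) ^ k) := by
      rw [← mul_assoc]
      exact mul_le_mul h6 hyb (Real.rpow_nonneg hy0.le _)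
        (by positivity)
    calc lam ^ k / Real.Gamma (α * k + 1) * (α * k * (|α * k - 1| * y ^ (α * k - 1 - 1)))
        ≤ lam ^ k / Real.Gamma (α * k + 1) *
            (6 * ((k:ℝ) + 1) ^ 2 * (ε ^ (-2:ℝ) * (ε ^ α) ^ k + R ^ (-2:ℝ) * (R ^ α) ^ k)) :=
          mul_le_mul_of_nonneg_left hprod (by positivity)
      _ = (6 * ε ^ (-2:ℝ)) * ((lam * ε ^ α) ^ k * ((k:ℝ) + 1) ^ 2 / Real.Gamma (α * k + 1))
          + (6 * R ^ (-2:ℝ)) * ((lam * R ^ α) ^ k * ((k:ℝ) + 1) ^ 2 / Real.Gamma (α * k + 1)) := by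
          rw [mul_pow, mul_pow]; field_simp
  have key2 : ∀ y ∈ Set.Ioo ε R, HasDerivAt (fun z => ∑' k : ℕ, F2 k z)
      (∑' k : ℕ, F3 k y) y := by
    intro y hy
    apply hasDerivAt_tsum_of_isPreconnected hu2 isOpen_Ioo
      (convex_Ioo ε R).isPreconnected (g := F2) (g' := F3) (y₀ := τ)
    · intro k z hz
      have hz0 : 0 < z := hεpos.trans hz.1
      have hd : HasDerivAt (fun s : ℝ => s ^ (α * (k:ℝ) - 1))
          ((α * k - 1) * z ^ (α * k - 1 - 1)) z :=
        Real.hasDerivAt_rpow_const (Or.inl hz0.ne')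
      simpa [hF2, hF3] using
        (hd.const_mul (α * (k:ℝ))).const_mul ((-lam) ^ k / Real.Gamma (α * k + 1))
    · exact hbound3
    · exact ⟨hετ, hτR⟩
    · exact Summable.of_norm_bounded hu1 (fun k => hbound2 k τ ⟨hτ, hτR⟩)
    · exact hy
  -- assemble
  have hEq : ∀ s : ℝ, 0 < s → mittagLeffler α 1 (-lam * s ^ α) = ∑' k : ℕ, F1 k s := by
    intro s hs
    unfold mittagLeffler
    apply tsum_congr
    intro k
    have hsk : s ^ (α * (k:ℝ)) = (s ^ α) ^ k := by
      rw [Real.rpow_mul hs.le, Real.rpow_natCast]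
    rw [hF1]
    beta_reduce
    rw [mul_pow, hsk]
    ring
  have hmem : Set.Ioo (0:ℝ) R ∈ nhds τ := isOpen_Ioo.mem_nhds ⟨hτ, hτR⟩
  have hfF : (fun s : ℝ => mittagLeffler α 1 (-lam * s ^ α)) =ᶠ[nhds τ]
      (fun z => ∑' k : ℕ, F1 k z) :=
    Filter.eventually_of_mem hmem (fun s hs => hEq s hs.1)
  have h2 : deriv (fun z => ∑' k : ℕ, F1 k z) =ᶠ[nhds τ] (fun y => ∑' k : ℕ, F2 k y) :=
    Filter.eventually_of_mem hmem (fun y hy => (key1 y hy).deriv)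
  have hle : deriv (deriv (fun s : ℝ => mittagLeffler α 1 (-lam * s ^ α))) τ
      = deriv (fun y => ∑' k : ℕ, F2 k y) τ := (hfF.deriv.trans h2).deriv_eq
  rw [hle, (key2 τ ⟨hετ, hτR⟩).deriv]
  -- final algebra
  have hsum3 : Summable (fun k : ℕ => F3 k τ) :=
    Summable.of_norm_bounded hu2 (fun k => hbound3 k τ ⟨hετ, hτR⟩)
  rw [Summable.tsum_eq_zero_add hsum3]
  have h0 : F3 0 τ = 0 := by simp [hF3]
  rw [h0, zero_add]
  have hRHS : -lam * τ ^ (α - 2) * mittagLeffler α (α - 1) (-lam * τ ^ α)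
      = ∑' j : ℕ, (-lam * τ ^ (α - 2)) * ((-lam * τ ^ α) ^ j / Real.Gamma (α * j + (α - 1))) := by
    rw [tsum_mul_left]
    unfold mittagLeffler
    rfl
  rw [hRHS]
  apply tsum_congr
  intro j
  have hj0 : (0:ℝ) ≤ (j:ℝ) := Nat.cast_nonneg j
  set x : ℝ := α * ((j:ℝ) + 1) with hx
  have hx1 : 1 < x := by
    rw [hx]; nlinarith
  have hcast : ((j + 1 : ℕ) : ℝ) = (j:ℝ) + 1 := by push_cast; ring
  have hgadd : Real.Gamma (x + 1) = x * ((x - 1) * Real.Gamma (x - 1)) := by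
    have h1 : Real.Gamma (x - 1 + 1) = (x - 1) * Real.Gamma (x - 1) :=
      Real.Gamma_add_one (by linarith)
    rw [show x - 1 + 1 = x by ring] at h1
    rw [Real.Gamma_add_one (by linarith : x ≠ 0), h1]
  have hΓpos : 0 < Real.Gamma (x - 1) := Real.Gamma_pos_of_pos (by linarith)
  have hτx : τ ^ (x - 1 - 1) = τ ^ (α - 2) * (τ ^ α) ^ j := by
    rw [show x - 1 - 1 = (α - 2) + α * j by rw [hx]; ring, Real.rpow_add hτ,
      Real.rpow_mul hτ.le, Real.rpow_natCast]
  have hden : α * (j:ℝ) + (α - 1) = x - 1 := by rw [hx]; ring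
  rw [hF3]
  beta_reduce
  rw [hcast, hden, ← hx, hgadd, hτx, mul_pow]
  have hxne : x ≠ 0 := by linarith
  have hxne1 : x - 1 ≠ 0 := by linarith
  field_simp
  ring

lemma ml_integral {α lam t : ℝ} (hα₁ : 1 < α) (hα₂ : α < 2) (hlam : 0 < lam) (ht : 0 < t) :
    (1 / Real.Gamma (2 - α)) *
        ∫ τ in (0 : ℝ)..t, (t - τ) ^ (1 - α) *
          (-lam * τ ^ (α - 2) * mittagLeffler α (α - 1) (-lam * τ ^ α))
      = -lam * mittagLeffler α 1 (-lam * t ^ α) := by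
  have hb : (0:ℝ) < 2 - α := by linarith
  have hΓb : (0:ℝ) < Real.Gamma (2 - α) := Real.Gamma_pos_of_pos hb
  have ha : ∀ j : ℕ, 0 < α * ((j:ℝ) + 1) - 1 := by
    intro j
    have : (0:ℝ) ≤ (j:ℝ) := Nat.cast_nonneg j
    nlinarith
  have hΓa : ∀ j : ℕ, 0 < Real.Gamma (α * ((j:ℝ) + 1) - 1) :=
    fun j => Real.Gamma_pos_of_pos (ha j)
  set T : ℕ → ℝ → ℝ := fun j τ =>
    ((-lam) ^ (j + 1) / Real.Gamma (α * ((j:ℝ) + 1) - 1)) *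
      (τ ^ (α * ((j:ℝ) + 1) - 1 - 1) * (t - τ) ^ (2 - α - 1)) with hT
  -- pointwise identity on Ioc 0 t
  have hpt : ∀ τ ∈ Set.Ioc (0:ℝ) t,
      (t - τ) ^ (1 - α) * (-lam * τ ^ (α - 2) * mittagLeffler α (α - 1) (-lam * τ ^ α))
        = ∑' j : ℕ, T j τ := by
    intro τ hτ
    have hτ0 : 0 < τ := hτ.1
    unfold mittagLeffler
    rw [← tsum_mul_left, ← tsum_mul_left]
    apply tsum_congr
    intro j
    rw [hT]
    beta_reduce
    have hτx : τ ^ (α * ((j:ℝ) + 1) - 1 - 1) = τ ^ (α - 2) * (τ ^ α) ^ j := by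
      rw [show α * ((j:ℝ) + 1) - 1 - 1 = (α - 2) + α * j by ring, Real.rpow_add hτ0,
        Real.rpow_mul hτ0.le, Real.rpow_natCast]
    rw [hτx, show (2:ℝ) - α - 1 = 1 - α by ring, mul_pow,
      show α * (j:ℝ) + (α - 1) = α * ((j:ℝ) + 1) - 1 by ring]
    have := (hΓa j).ne'
    field_simp
    ring
  -- integrability
  have hInt : ∀ j : ℕ, MeasureTheory.IntegrableOn (T j) (Set.Ioc (0:ℝ) t) volume := by
    intro j
    have := (realBeta_scaled_integrable (ha j) hb ht).const_mul
      ((-lam) ^ (j + 1) / Real.Gamma (α * ((j:ℝ) + 1) - 1))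
    rwa [intervalIntegrable_iff_integrableOn_Ioc_of_le ht.le] at this
  -- value of each integral
  have hval : ∀ j : ℕ, ∫ τ in (0:ℝ)..t, T j τ
      = ((-lam) ^ (j + 1) / Real.Gamma (α * ((j:ℝ) + 1) - 1)) *
          (t ^ ((α * ((j:ℝ) + 1) - 1) + (2 - α) - 1) *
            (Real.Gamma (α * ((j:ℝ) + 1) - 1) * Real.Gamma (2 - α) /
              Real.Gamma ((α * ((j:ℝ) + 1) - 1) + (2 - α)))) := by
    intro j
    rw [hT]
    beta_reduce
    rw [intervalIntegral.integral_const_mul, realBeta_scaled (ha j) hb ht]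
  -- norm integrals
  have hnormval : ∀ j : ℕ, (∫ τ in Set.Ioc (0:ℝ) t, ‖T j τ‖)
      = (lam ^ (j + 1) / Real.Gamma (α * ((j:ℝ) + 1) - 1)) *
          (t ^ ((α * ((j:ℝ) + 1) - 1) + (2 - α) - 1) *
            (Real.Gamma (α * ((j:ℝ) + 1) - 1) * Real.Gamma (2 - α) /
              Real.Gamma ((α * ((j:ℝ) + 1) - 1) + (2 - α)))) := by
    intro j
    have hcongr : ∀ τ ∈ Set.Ioc (0:ℝ) t, ‖T j τ‖
        = (lam ^ (j + 1) / Real.Gamma (α * ((j:ℝ) + 1) - 1)) *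
            (τ ^ (α * ((j:ℝ) + 1) - 1 - 1) * (t - τ) ^ (2 - α - 1)) := by
      intro τ hτ
      rw [hT]
      beta_reduce
      rw [Real.norm_eq_abs, abs_mul, abs_div, abs_pow, abs_neg, abs_of_pos hlam,
        abs_of_pos (hΓa j), abs_mul,
        abs_of_nonneg (Real.rpow_nonneg hτ.1.le _),
        abs_of_nonneg (Real.rpow_nonneg (by linarith [hτ.2] : (0:ℝ) ≤ t - τ) _)]
    rw [MeasureTheory.setIntegral_congr_fun measurableSet_Ioc hcongr,
      MeasureTheory.integral_const_mul, ← intervalIntegral.integral_of_le ht.le,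
      realBeta_scaled (ha j) hb ht]
  -- summability of norm integrals
  have hsumnorm : Summable (fun j : ℕ => ∫ τ in Set.Ioc (0:ℝ) t, ‖T j τ‖) := by
    apply Summable.of_nonneg_of_le
      (f := fun j : ℕ => (lam * Real.Gamma (2 - α)) *
        ((lam * t ^ α) ^ j * ((j:ℝ) + 1) ^ 2 / Real.Gamma (α * j + 1)))
    · intro j
      exact MeasureTheory.integral_nonneg (fun τ => norm_nonneg _)
    · intro j
      rw [hnormval j]
      have he1 : (α * ((j:ℝ) + 1) - 1) + (2 - α) = α * j + 1 := by ring
      have he2 : t ^ ((α * ((j:ℝ) + 1) - 1) + (2 - α) - 1) = (t ^ α) ^ j := by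
        rw [show (α * ((j:ℝ) + 1) - 1) + (2 - α) - 1 = α * j by ring,
          Real.rpow_mul ht.le, Real.rpow_natCast]
      rw [he2, he1]
      have hΓj : 0 < Real.Gamma (α * (j:ℝ) + 1) := by
        apply Real.Gamma_pos_of_pos; positivity
      have hle : (1:ℝ) ≤ ((j:ℝ) + 1) ^ 2 := by nlinarith [Nat.cast_nonneg (α := ℝ) j]
      have hE : (lam ^ (j + 1) / Real.Gamma (α * ((j:ℝ) + 1) - 1)) *
          ((t ^ α) ^ j * (Real.Gamma (α * ((j:ℝ) + 1) - 1) * Real.Gamma (2 - α) /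
            Real.Gamma (α * (j:ℝ) + 1)))
          = (lam * Real.Gamma (2 - α)) * ((lam * t ^ α) ^ j / Real.Gamma (α * (j:ℝ) + 1)) := by
        rw [mul_pow, pow_succ]
        field_simp [(hΓa j).ne']
      rw [hE]
      apply mul_le_mul_of_nonneg_left _ (by positivity)
      rw [div_le_div_iff_of_pos_right hΓj]
      nlinarith [pow_nonneg (show (0:ℝ) ≤ lam * t ^ α by positivity) j]
    · exact (summable_ml_aux hα₁ one_pos (by positivity)).mul_left _
  have hswap := MeasureTheory.integral_tsum_of_summable_integral_norm
    (μ := MeasureTheory.volume.restrict (Set.Ioc (0:ℝ) t)) (F := T) hInt hsumnorm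
  rw [intervalIntegral.integral_of_le ht.le,
    MeasureTheory.setIntegral_congr_fun measurableSet_Ioc hpt, ← hswap]
  have hvals : ∀ j : ℕ, (∫ τ in Set.Ioc (0:ℝ) t, T j τ)
      = (Real.Gamma (2 - α) * -lam) * ((-lam * t ^ α) ^ j / Real.Gamma (α * j + 1)) := by
    intro j
    rw [← intervalIntegral.integral_of_le ht.le, hval j]
    have he2 : t ^ ((α * ((j:ℝ) + 1) - 1) + (2 - α) - 1) = (t ^ α) ^ j := by
      rw [show (α * ((j:ℝ) + 1) - 1) + (2 - α) - 1 = α * j by ring,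
        Real.rpow_mul ht.le, Real.rpow_natCast]
    have he1 : (α * ((j:ℝ) + 1) - 1) + (2 - α) = α * j + 1 := by ring
    rw [he2, he1, mul_pow, pow_succ]
    field_simp [(hΓa j).ne']
  rw [show (∑' j : ℕ, ∫ τ in Set.Ioc (0:ℝ) t, T j τ)
      = (Real.Gamma (2 - α) * -lam) * ∑' j : ℕ, ((-lam * t ^ α) ^ j / Real.Gamma (α * j + 1))
    from by rw [tsum_congr hvals, tsum_mul_left]]
  have hml : mittagLeffler α 1 (-lam * t ^ α)
      = ∑' j : ℕ, ((-lam * t ^ α) ^ j / Real.Gamma (α * j + 1)) := rfl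
  rw [hml]
  field_simp

/-- For `α ∈ (1,2)`, `λ > 0` and `t > 0`, the Caputo derivative identity
`∂_t^α E_α(-λ t^α) = -λ E_α(-λ t^α)` holds: the second derivative of
`τ ↦ E_α(-λ τ^α)` on `(0,∞)` is `-λ τ^{α-2} E_{α,α-1}(-λ τ^α)`, and
`(1/Γ(2-α)) ∫_0^t (t-τ)^{1-α} (-λ τ^{α-2} E_{α,α-1}(-λ τ^α)) dτ = -λ E_α(-λ t^α)`. -/
theorem caputo_mittagLeffler_one (α lam t : ℝ) (hα₁ : 1 < α) (hα₂ : α < 2)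
    (hlam : 0 < lam) (ht : 0 < t) :
    (∀ τ : ℝ, 0 < τ →
        deriv (deriv (fun s : ℝ => mittagLeffler α 1 (-lam * s ^ α))) τ =
          -lam * τ ^ (α - 2) * mittagLeffler α (α - 1) (-lam * τ ^ α)) ∧
      (1 / Real.Gamma (2 - α)) *
          ∫ τ in (0 : ℝ)..t, (t - τ) ^ (1 - α) *
            (-lam * τ ^ (α - 2) * mittagLeffler α (α - 1) (-lam * τ ^ α))
        = -lam * mittagLeffler α 1 (-lam * t ^ α) := by
  exact ⟨fun τ hτ => ml_deriv2 hα₁ hα₂ hlam hτ, ml_integral hα₁ hα₂ hlam ht⟩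
end
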